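/- arXiv:1805.06672 — 5 statements merged into one kernel-verified Lean document; each statement's English description precedes it below -/
import Mathlib

section
/- Let k ≥ 1, let a_0, ..., a_{k+1} ∈ ℝ satisfy ∑_{j=0}^{k+1} a_j 2^{jl} = 0 for all l = 0, ..., k, and let Ω_j = B(0, 2^{j+1}) \ B(0, 2^j) ⊂ ℝ^n. Then for every polynomial P : ℝ^n → ℝ of degree at most k, one has ∑_{j=0}^{k+1} a_j · (average of P over Ω_j) = 0. -/
open Finset MeasureTheory Metric Pointwise

lemma annulus_eq_smul (n j : ℕ) :
    ball (0 : EuclideanSpace ℝ (Fin n)) (2 ^ (j + 1))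
        \ ball (0 : EuclideanSpace ℝ (Fin n)) (2 ^ j)
      = ((2 : ℝ) ^ j) • (ball (0 : EuclideanSpace ℝ (Fin n)) 2
          \ ball (0 : EuclideanSpace ℝ (Fin n)) 1) := by
  have h2 : ((2 : ℝ) ^ j) ≠ 0 := by positivity
  rw [Set.smul_set_sdiff₀ h2, _root_.smul_ball h2, _root_.smul_ball h2]
  simp [abs_of_nonneg, Real.norm_eq_abs, abs_of_pos, pow_succ]

lemma avg_scale (n j l : ℕ) (f : EuclideanSpace ℝ (Fin n) → ℝ)
    (hf : ∀ x : EuclideanSpace ℝ (Fin n), f (((2:ℝ)^j) • x) = (2:ℝ) ^ (j * l) * f x) :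
    (⨍ x in ball (0 : EuclideanSpace ℝ (Fin n)) (2 ^ (j + 1))
        \ ball (0 : EuclideanSpace ℝ (Fin n)) (2 ^ j), f x ∂volume)
      = (2:ℝ) ^ (j * l) * ⨍ x in ball (0 : EuclideanSpace ℝ (Fin n)) 2
          \ ball (0 : EuclideanSpace ℝ (Fin n)) 1, f x ∂volume := by
  set R : ℝ := (2:ℝ)^j with hR
  have hRpos : 0 < R := by positivity
  set s := ball (0 : EuclideanSpace ℝ (Fin n)) 2 \ ball (0 : EuclideanSpace ℝ (Fin n)) 1
  set d := Module.finrank ℝ (EuclideanSpace ℝ (Fin n))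
  rw [annulus_eq_smul, setAverage_eq, setAverage_eq]
  have hμ : (volume (R • s)).toReal = R ^ d * (volume s).toReal := by
    rw [Measure.addHaar_smul_of_nonneg volume hRpos.le s, ENNReal.toReal_mul,
      ENNReal.toReal_ofReal (by positivity)]
  have hI : ∫ x in R • s, f x ∂volume = R ^ d * ((2:ℝ) ^ (j * l) * ∫ x in s, f x ∂volume) := by
    have := Measure.setIntegral_comp_smul_of_pos volume f s hRpos
    have h2 : ∫ x in s, f (R • x) ∂volume = (2:ℝ) ^ (j * l) * ∫ x in s, f x ∂volume := by
      simp_rw [hf]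
      exact integral_const_mul _ _
    rw [h2, smul_eq_mul] at this
    have hd : (R ^ d) ≠ 0 := by positivity
    have := this.symm
    rw [inv_mul_eq_iff_eq_mul₀ hd] at this
    exact this
  rw [measureReal_def, measureReal_def, hμ, hI, smul_eq_mul, smul_eq_mul]
  have hd : (R ^ d) ≠ 0 := by positivity
  rw [mul_inv]
  linear_combination (2 ^ (j*l) * (volume s).toReal⁻¹ * ∫ x in s, f x) * inv_mul_cancel₀ hd

lemma integrable_monomial (n j : ℕ) (m : Fin n →₀ ℕ) :
    IntegrableOn (fun x : EuclideanSpace ℝ (Fin n) => ∏ i, x i ^ m i)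
      (ball (0 : EuclideanSpace ℝ (Fin n)) (2 ^ (j + 1))
        \ ball (0 : EuclideanSpace ℝ (Fin n)) (2 ^ j)) volume := by
  have hc : Continuous (fun x : EuclideanSpace ℝ (Fin n) => ∏ i, x i ^ m i) :=
    continuous_finset_prod _ fun i _ => ((EuclideanSpace.proj i).continuous).pow _
  have : IntegrableOn (fun x : EuclideanSpace ℝ (Fin n) => ∏ i, x i ^ m i)
      (closedBall (0 : EuclideanSpace ℝ (Fin n)) (2 ^ (j + 1))) volume :=
    hc.locallyIntegrable.integrableOn_isCompact (isCompact_closedBall _ _)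
  exact this.mono_set ((Set.diff_subset).trans ball_subset_closedBall)

/-- The Vandermonde coefficients annihilate the annular averages of any
polynomial of total degree at most `k`. -/
theorem vandermonde_annihilates_polynomial_averages (n k : ℕ) (hn : 1 ≤ n) (hk : 1 ≤ k)
    (a : ℕ → ℝ)
    (hsys : ∀ l : ℕ, l ≤ k → ∑ j ∈ Finset.range (k + 2), a j * 2 ^ (j * l) = 0)
    (P : MvPolynomial (Fin n) ℝ) (hP : P.totalDegree ≤ k) :
    ∑ j ∈ Finset.range (k + 2),
        a j * ⨍ x in (ball (0 : EuclideanSpace ℝ (Fin n)) (2 ^ (j + 1))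
            \ ball (0 : EuclideanSpace ℝ (Fin n)) (2 ^ j)),
          MvPolynomial.eval (fun i => x i) P ∂volume = 0 := by
  classical
  set E := EuclideanSpace ℝ (Fin n)
  set A : ℕ → Set E := fun j => ball (0 : E) (2 ^ (j + 1)) \ ball (0 : E) (2 ^ j) with hA
  -- the total degree of a monomial
  set L : (Fin n →₀ ℕ) → ℕ := fun m => ∑ i, m i with hL
  have hLsum : ∀ m : Fin n →₀ ℕ, L m = m.sum fun _ e => e := by
    intro m
    rw [Finsupp.sum]
    exact (Finset.sum_subset (Finset.subset_univ _)
      (fun i _ hi => Finsupp.notMem_support_iff.mp hi)).symm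
  -- expand the average as a sum over support
  have expand : ∀ j : ℕ,
      (⨍ x in A j, MvPolynomial.eval (fun i => x i) P ∂volume)
        = ∑ m ∈ P.support, MvPolynomial.coeff m P *
            ⨍ x in A j, ∏ i, x i ^ m i ∂volume := by
    intro j
    have heval : ∀ x : E, MvPolynomial.eval (fun i => x i) P
        = ∑ m ∈ P.support, MvPolynomial.coeff m P * ∏ i, x i ^ m i := by
      intro x; rw [MvPolynomial.eval_eq']
    have hint : ∀ m ∈ P.support,
        IntegrableOn (fun x : E => MvPolynomial.coeff m P * ∏ i, x i ^ m i) (A j) volume :=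
      fun m _ => (integrable_monomial n j m).const_mul _
    rw [setAverage_eq]
    simp_rw [heval]
    rw [integral_finset_sum _ hint, Finset.smul_sum]
    apply Finset.sum_congr rfl
    intro m _
    rw [setAverage_eq, integral_const_mul, smul_eq_mul, smul_eq_mul]
    ring
  -- scaling of monomial averages
  have scale : ∀ (j : ℕ) (m : Fin n →₀ ℕ),
      (⨍ x in A j, ∏ i, x i ^ m i ∂volume)
        = (2:ℝ) ^ (j * L m) * ⨍ x in ball (0 : E) 2 \ ball (0 : E) 1, ∏ i, x i ^ m i ∂volume := by
    intro j m
    apply avg_scale n j (L m)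
    intro x
    have : ∀ i : Fin n, (((2:ℝ)^j) • x) i = (2:ℝ)^j * x i := by
      intro i; simp [PiLp.smul_apply, smul_eq_mul]
    simp_rw [this, mul_pow, Finset.prod_mul_distrib, Finset.prod_pow_eq_pow_sum]
    rw [← pow_mul]
  simp only [hA, E] at expand scale
  simp_rw [expand, scale]
  rw [Finset.sum_congr rfl (fun j _ => Finset.mul_sum _ _ _), Finset.sum_comm]
  apply Finset.sum_eq_zero
  intro m hm
  have hml : L m ≤ k := by
    rw [hLsum m]
    exact le_trans (MvPolynomial.le_totalDegree hm) hP
  have h0 := hsys (L m) hml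
  calc ∑ j ∈ Finset.range (k + 2), a j * (MvPolynomial.coeff m P *
          ((2:ℝ) ^ (j * L m) * ⨍ x in ball (0 : E) 2 \ ball (0 : E) 1, ∏ i, x i ^ m i ∂volume))
      = (∑ j ∈ Finset.range (k + 2), a j * 2 ^ (j * L m)) * (MvPolynomial.coeff m P *
          ⨍ x in ball (0 : E) 2 \ ball (0 : E) 1, ∏ i, x i ^ m i ∂volume) := by
        rw [Finset.sum_mul]
        exact Finset.sum_congr rfl fun j _ => by ring
    _ = 0 := by rw [h0, zero_mul]
end

section
/- Let n ≥ 1, η ∈ (0,1), and α ∈ (0,n). There exists a constant C = C(n, η, α) > 0 such that for every f ∈ Ċ^η(ℝ^n) ∩ BMO(ℝ^n), ‖f‖_{L^∞} ≤ C + C‖f‖_{BMO}(1 + log⁺[ sup_{z∈ℝ^n} ∫_{ℝ^n} |f(y)|/(|z-y|+1)^α dy + ‖f‖_{Ċ^η} ]). -/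
open MeasureTheory Metric Real

lemma cont_of_holder {X : Type*} [NormedAddCommGroup X] (f : X → ℝ) (H η : ℝ)
    (hH : 0 ≤ H) (hη : 0 < η)
    (hf : ∀ x y, |f x - f y| ≤ H * ‖x - y‖ ^ η) : Continuous f := by
  have : HolderWith ⟨H, hH⟩ ⟨η, hη.le⟩ f := by
    intro x y
    rw [edist_dist, edist_dist]
    have h1 : dist (f x) (f y) ≤ H * dist x y ^ η := by
      rw [Real.dist_eq, dist_eq_norm]; exact hf x y
    calc ENNReal.ofReal (dist (f x) (f y)) ≤ ENNReal.ofReal (H * dist x y ^ η) :=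
          ENNReal.ofReal_le_ofReal h1
      _ = ENNReal.ofReal H * ENNReal.ofReal (dist x y) ^ (η : ℝ) := by
          rw [ENNReal.ofReal_mul hH, ← ENNReal.ofReal_rpow_of_nonneg dist_nonneg hη.le]
      _ = _ := by
          congr 1
          · simp [ENNReal.ofReal, Real.toNNReal_of_nonneg hH]; rfl
  exact this.continuous (by exact_mod_cast hη)


lemma BGW_nontriv (n : ℕ) (hn : 1 ≤ n) : Nontrivial (EuclideanSpace ℝ (Fin n)) := by
  haveI : Nonempty (Fin n) := ⟨⟨0, hn⟩⟩
  infer_instance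

lemma BGW_vol_ball (n : ℕ) (hn : 1 ≤ n) (x : EuclideanSpace ℝ (Fin n)) {r : ℝ} (hr : 0 ≤ r) :
    (volume (ball x r)).toReal
      = r ^ n * (volume (ball (0 : EuclideanSpace ℝ (Fin n)) 1)).toReal := by
  haveI := BGW_nontriv n hn
  rw [Measure.addHaar_ball _ _ hr, finrank_euclideanSpace_fin, ENNReal.toReal_mul,
    ENNReal.toReal_ofReal (by positivity)]

lemma BGW_intOn (n : ℕ) (f : EuclideanSpace ℝ (Fin n) → ℝ) (hf : Continuous f)
    (x : EuclideanSpace ℝ (Fin n)) (r : ℝ) : IntegrableOn f (ball x r) volume :=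
  ((hf.continuousOn).integrableOn_compact (isCompact_closedBall x r)).mono_set
    ball_subset_closedBall

lemma BGW_abs_avg_sub (n : ℕ) (f : EuclideanSpace ℝ (Fin n) → ℝ) (hf : Continuous f)
    (x : EuclideanSpace ℝ (Fin n)) {r : ℝ} (hr : 0 < r) (c : ℝ) :
    |(⨍ y in ball x r, f y ∂volume) - c|
      ≤ (volume (ball x r)).toReal⁻¹ * ∫ y in ball x r, |f y - c| ∂volume := by
  have hV0 : 0 < (volume (ball x r)).toReal :=
    ENNReal.toReal_pos (measure_ball_pos volume x hr).ne' measure_ball_lt_top.ne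
  have hi := BGW_intOn n f hf x r
  have hic : IntegrableOn (fun _ => c) (ball x r) volume :=
    integrableOn_const measure_ball_lt_top.ne enorm_ne_top
  have h1 : (⨍ y in ball x r, f y ∂volume) - c
      = (volume (ball x r)).toReal⁻¹ * ∫ y in ball x r, (f y - c) ∂volume := by
    rw [integral_sub hi hic, setIntegral_const, setAverage_eq, smul_eq_mul, smul_eq_mul]
    simp only [measureReal_def]; field_simp
  rw [h1, abs_mul, abs_inv, abs_of_pos hV0]
  gcongr
  calc |∫ y in ball x r, (f y - c) ∂volume| ≤ ∫ y in ball x r, ‖f y - c‖ ∂volume := by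
        rw [← Real.norm_eq_abs]; exact norm_integral_le_integral_norm _
    _ = ∫ y in ball x r, |f y - c| ∂volume := by simp [Real.norm_eq_abs]

lemma BGW_holder_step (n : ℕ) {η : ℝ} (hη : 0 < η)
    (f : EuclideanSpace ℝ (Fin n) → ℝ) (hf : Continuous f) {Hη : ℝ} (hHη0 : 0 ≤ Hη)
    (hH : ∀ x y, |f x - f y| ≤ Hη * ‖x - y‖ ^ η)
    (x : EuclideanSpace ℝ (Fin n)) {r : ℝ} (hr : 0 < r) :
    |f x - ⨍ y in ball x r, f y ∂volume| ≤ Hη * r ^ η := by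
  have hV0 : 0 < (volume (ball x r)).toReal :=
    ENNReal.toReal_pos (measure_ball_pos volume x hr).ne' measure_ball_lt_top.ne
  rw [abs_sub_comm]
  refine (BGW_abs_avg_sub n f hf x hr (f x)).trans ?_
  have h2 : ∫ y in ball x r, |f y - f x| ∂volume
      ≤ ∫ _y in ball x r, Hη * r ^ η ∂volume := by
    refine setIntegral_mono_on ((BGW_intOn n f hf x r).sub
      (integrableOn_const measure_ball_lt_top.ne enorm_ne_top)).abs
      (integrableOn_const measure_ball_lt_top.ne enorm_ne_top) measurableSet_ball ?_
    intro y hy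
    refine (hH y x).trans ?_
    have hyx : ‖y - x‖ ≤ r := le_of_lt (by simpa [dist_eq_norm] using mem_ball.1 hy)
    exact mul_le_mul_of_nonneg_left (Real.rpow_le_rpow (norm_nonneg _) hyx hη.le) hHη0
  calc (volume (ball x r)).toReal⁻¹ * ∫ y in ball x r, |f y - f x| ∂volume
      ≤ (volume (ball x r)).toReal⁻¹ * ∫ _y in ball x r, Hη * r ^ η ∂volume := by
        gcongr
    _ = Hη * r ^ η := by
        rw [setIntegral_const, smul_eq_mul]; simp only [measureReal_def]; field_simp

lemma BGW_double (n : ℕ) (hn : 1 ≤ n) (f : EuclideanSpace ℝ (Fin n) → ℝ) (hf : Continuous f)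
    {B : ℝ}
    (hB : ∀ (z : EuclideanSpace ℝ (Fin n)) (r : ℝ), 0 < r →
      ⨍ x in ball z r, |f x - ⨍ y in ball z r, f y ∂volume| ∂volume ≤ B)
    (x : EuclideanSpace ℝ (Fin n)) {r : ℝ} (hr : 0 < r) :
    |(⨍ y in ball x r, f y ∂volume) - ⨍ y in ball x (2 * r), f y ∂volume|
      ≤ 2 ^ n * B := by
  set c := ⨍ y in ball x (2 * r), f y ∂volume with hc
  have hr2 : 0 < 2 * r := by linarith
  have hV0 : 0 < (volume (ball x r)).toReal :=
    ENNReal.toReal_pos (measure_ball_pos volume x hr).ne' measure_ball_lt_top.ne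
  have hW0 : 0 < (volume (ball x (2 * r))).toReal :=
    ENNReal.toReal_pos (measure_ball_pos volume x hr2).ne' measure_ball_lt_top.ne
  have hWV : (volume (ball x (2 * r))).toReal = 2 ^ n * (volume (ball x r)).toReal := by
    rw [BGW_vol_ball n hn x hr.le, BGW_vol_ball n hn x hr2.le, mul_pow]; ring
  refine (BGW_abs_avg_sub n f hf x hr c).trans ?_
  have h2 : ∫ y in ball x r, |f y - c| ∂volume
      ≤ ∫ y in ball x (2 * r), |f y - c| ∂volume := by
    refine setIntegral_mono_set ((BGW_intOn n f hf x (2 * r)).sub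
      (integrableOn_const measure_ball_lt_top.ne enorm_ne_top)).abs
      (Filter.Eventually.of_forall fun y => abs_nonneg _) ?_
    exact HasSubset.Subset.eventuallyLE (ball_subset_ball (by linarith))
  have h3 : ∫ y in ball x (2 * r), |f y - c| ∂volume
      = (volume (ball x (2 * r))).toReal
        * ⨍ y in ball x (2 * r), |f y - c| ∂volume := by
    rw [setAverage_eq, smul_eq_mul]; simp only [measureReal_def]; field_simp
  calc (volume (ball x r)).toReal⁻¹ * ∫ y in ball x r, |f y - c| ∂volume
      ≤ (volume (ball x r)).toReal⁻¹
        * ((volume (ball x (2 * r))).toReal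
          * ⨍ y in ball x (2 * r), |f y - c| ∂volume) := by
        rw [← h3]; gcongr
    _ ≤ (volume (ball x r)).toReal⁻¹ * ((volume (ball x (2 * r))).toReal * B) := by
        gcongr
        exact hB x (2 * r) hr2
    _ = 2 ^ n * B := by rw [hWV]; field_simp

lemma BGW_tail (n : ℕ) (hn : 1 ≤ n) {α : ℝ} (hα0 : 0 < α)
    (f : EuclideanSpace ℝ (Fin n) → ℝ) (hf : Continuous f) {K : ℝ}
    (hInt : ∀ z : EuclideanSpace ℝ (Fin n),
      Integrable (fun y => |f y| / (‖z - y‖ + 1) ^ α))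
    (hK : ∀ z : EuclideanSpace ℝ (Fin n),
      ∫ y, |f y| / (‖z - y‖ + 1) ^ α ∂volume ≤ K)
    (x : EuclideanSpace ℝ (Fin n)) {R : ℝ} (hR : 1 ≤ R) :
    |⨍ y in ball x R, f y ∂volume|
      ≤ (R + 1) ^ α * K
        / (R ^ n * (volume (ball (0 : EuclideanSpace ℝ (Fin n)) 1)).toReal) := by
  have hR0 : (0:ℝ) < R := lt_of_lt_of_le one_pos hR
  have hV : (volume (ball x R)).toReal
      = R ^ n * (volume (ball (0 : EuclideanSpace ℝ (Fin n)) 1)).toReal :=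
    BGW_vol_ball n hn x hR0.le
  have hV0 : 0 < (volume (ball x R)).toReal :=
    ENNReal.toReal_pos (measure_ball_pos volume x hR0).ne' measure_ball_lt_top.ne
  have h0 : |⨍ y in ball x R, f y ∂volume|
      ≤ (volume (ball x R)).toReal⁻¹ * ∫ y in ball x R, |f y - 0| ∂volume := by
    simpa using BGW_abs_avg_sub n f hf x hR0 0
  have hRa : (0:ℝ) ≤ (R + 1) ^ α := (Real.rpow_pos_of_pos (by linarith) α).le
  have h1 : ∫ y in ball x R, |f y - 0| ∂volume
      ≤ ∫ y in ball x R, (R + 1) ^ α * (|f y| / (‖x - y‖ + 1) ^ α) ∂volume := by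
    refine setIntegral_mono_on ?_ ?_ measurableSet_ball ?_
    · simp only [sub_zero]; exact (BGW_intOn n f hf x R).abs
    · exact (((hInt x).const_mul ((R + 1) ^ α)).integrableOn)
    · intro y hy
      have hb : (0:ℝ) < (‖x - y‖ + 1) ^ α :=
        Real.rpow_pos_of_pos (by positivity) α
      have hxy : ‖x - y‖ + 1 ≤ R + 1 := by
        have : ‖x - y‖ ≤ R := le_of_lt (by
          rw [← dist_eq_norm, dist_comm]; exact mem_ball.1 hy)
        linarith
      have hmono : (‖x - y‖ + 1) ^ α ≤ (R + 1) ^ α :=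
        Real.rpow_le_rpow (by positivity) hxy hα0.le
      calc |f y - 0| = |f y| / (‖x - y‖ + 1) ^ α * (‖x - y‖ + 1) ^ α := by
            rw [div_mul_cancel₀ _ hb.ne', sub_zero]
        _ ≤ |f y| / (‖x - y‖ + 1) ^ α * (R + 1) ^ α :=
            mul_le_mul_of_nonneg_left hmono (by positivity)
        _ = (R + 1) ^ α * (|f y| / (‖x - y‖ + 1) ^ α) := mul_comm _ _
  have h2 : ∫ y in ball x R, (R + 1) ^ α * (|f y| / (‖x - y‖ + 1) ^ α) ∂volume
      ≤ (R + 1) ^ α * K := by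
    rw [integral_const_mul]
    refine mul_le_mul_of_nonneg_left ?_ hRa
    refine le_trans (setIntegral_le_integral (hInt x)
      (Filter.Eventually.of_forall fun y => by positivity)) (hK x)
  calc |⨍ y in ball x R, f y ∂volume|
      ≤ (volume (ball x R)).toReal⁻¹ * ((R + 1) ^ α * K) := by
        refine h0.trans ?_
        refine mul_le_mul_of_nonneg_left (h1.trans h2) (by positivity)
    _ = (R + 1) ^ α * K
        / (R ^ n * (volume (ball (0 : EuclideanSpace ℝ (Fin n)) 1)).toReal) := by
        rw [hV]; ring

lemma BGW_telescope (n : ℕ) (hn : 1 ≤ n) {η : ℝ} (hη : 0 < η)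
    (f : EuclideanSpace ℝ (Fin n) → ℝ) (hf : Continuous f) {Hη B : ℝ} (hHη0 : 0 ≤ Hη)
    (hH : ∀ x y, |f x - f y| ≤ Hη * ‖x - y‖ ^ η)
    (hB : ∀ (z : EuclideanSpace ℝ (Fin n)) (r : ℝ), 0 < r →
      ⨍ x in ball z r, |f x - ⨍ y in ball z r, f y ∂volume| ∂volume ≤ B)
    (x : EuclideanSpace ℝ (Fin n)) {r : ℝ} (hr : 0 < r) (N : ℕ) :
    |f x - ⨍ y in ball x (2 ^ N * r), f y ∂volume|
      ≤ Hη * r ^ η + N * (2 ^ n * B) := by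
  induction N with
  | zero => simpa using BGW_holder_step n hη f hf hHη0 hH x hr
  | succ N ih =>
      have h2 : (2:ℝ) ^ (N + 1) * r = 2 * (2 ^ N * r) := by ring
      have hrN : (0:ℝ) < 2 ^ N * r := by positivity
      calc |f x - ⨍ y in ball x (2 ^ (N + 1) * r), f y ∂volume|
          ≤ |f x - ⨍ y in ball x (2 ^ N * r), f y ∂volume|
            + |(⨍ y in ball x (2 ^ N * r), f y ∂volume)
              - ⨍ y in ball x (2 ^ (N + 1) * r), f y ∂volume| := abs_sub_le _ _ _
        _ ≤ (Hη * r ^ η + N * (2 ^ n * B)) + 2 ^ n * B := by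
            refine add_le_add ih ?_
            rw [h2]
            exact BGW_double n hn f hf hB x hrN
        _ = Hη * r ^ η + (N + 1 : ℕ) * (2 ^ n * B) := by push_cast; ring

/-- Brezis–Gallouet–Wainger type inequality with the BMO seminorm:
`‖f‖_∞ ≤ C + C‖f‖_BMO (1 + log⁺[sup_z ∫ |f(y)|/(|z-y|+1)^α dy + ‖f‖_{Ċ^η}])`. -/
theorem BGW_BMO (n : ℕ) (hn : 1 ≤ n) (η α : ℝ) (hη : η ∈ Set.Ioo (0 : ℝ) 1)
    (hα : α ∈ Set.Ioo (0 : ℝ) (n : ℝ)) :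
    ∃ C : ℝ, 0 < C ∧
      ∀ (f : EuclideanSpace ℝ (Fin n) → ℝ) (Hη B K : ℝ),
        (∀ x y, |f x - f y| ≤ Hη * ‖x - y‖ ^ η) →
        (∀ (z : EuclideanSpace ℝ (Fin n)) (r : ℝ), 0 < r →
          ⨍ x in ball z r, |f x - ⨍ y in ball z r, f y ∂volume| ∂volume ≤ B) →
        (∀ z : EuclideanSpace ℝ (Fin n),
          Integrable (fun y => |f y| / (‖z - y‖ + 1) ^ α)) →
        (∀ z : EuclideanSpace ℝ (Fin n),
          ∫ y, |f y| / (‖z - y‖ + 1) ^ α ∂volume ≤ K) →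
        ∀ x, |f x| ≤ C + C * B * (1 + max (Real.log (K + Hη)) 0) := by
  obtain ⟨hη0, hη1⟩ := hη
  obtain ⟨hα0, hαn⟩ := hα
  haveI := BGW_nontriv n hn
  obtain ⟨ω, hω_def⟩ : ∃ w : ℝ,
      w = (volume (ball (0 : EuclideanSpace ℝ (Fin n)) 1)).toReal := ⟨_, rfl⟩
  have hω : 0 < ω := by
    rw [hω_def]
    exact ENNReal.toReal_pos (measure_ball_pos volume _ one_pos).ne' measure_ball_lt_top.ne
  have hlog2 : 0 < Real.log 2 := Real.log_pos one_lt_two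
  have hna : 0 < (n : ℝ) - α := sub_pos.2 hαn
  obtain ⟨c, hc_def⟩ : ∃ c : ℝ,
      c = 1 / (η * Real.log 2) + 1 / (((n : ℝ) - α) * Real.log 2) := ⟨_, rfl⟩
  have hc0 : 0 < c := by rw [hc_def]; positivity
  refine ⟨(1 + 2 ^ α / ω) + 2 ^ n * (c + 2), by positivity, ?_⟩
  intro f Hη B K hH hB hInt hK x
  -- nonnegativity of the constants
  have hHη0 : 0 ≤ Hη := by
    have h := hH x (x + EuclideanSpace.single (⟨0, hn⟩ : Fin n) 1)
    have hxy : ‖x - (x + EuclideanSpace.single (⟨0, hn⟩ : Fin n) 1)‖ = 1 := by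
      have : x - (x + EuclideanSpace.single (⟨0, hn⟩ : Fin n) 1)
          = -(EuclideanSpace.single (⟨0, hn⟩ : Fin n) (1 : ℝ)) := by abel
      rw [this, norm_neg, EuclideanSpace.norm_single]
      norm_num
    rw [hxy, Real.one_rpow, mul_one] at h
    exact le_trans (abs_nonneg _) h
  have hf : Continuous f := cont_of_holder f Hη η hHη0 hη0 hH
  have hB0 : 0 ≤ B := by
    refine le_trans ?_ (hB x 1 one_pos)
    rw [setAverage_eq, smul_eq_mul]
    have : 0 ≤ ∫ y in ball x 1, |f y - ⨍ z in ball x 1, f z ∂volume| ∂volume :=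
      integral_nonneg fun y => abs_nonneg _
    positivity
  have hK0 : 0 ≤ K := by
    refine le_trans ?_ (hK x)
    exact integral_nonneg fun y => by positivity
  obtain ⟨L, hL_def⟩ : ∃ L : ℝ, L = max (Real.log (K + Hη)) 0 := ⟨_, rfl⟩
  rw [← hL_def]
  have hL0 : 0 ≤ L := hL_def ▸ le_max_right _ _
  have hL1 : Real.log (K + Hη) ≤ L := hL_def ▸ le_max_left _ _
  have h_expL : K + Hη ≤ Real.exp L := by
    rcases eq_or_lt_of_le (add_nonneg hK0 hHη0) with h | h
    · rw [← h]; exact (Real.exp_pos L).le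
    · calc K + Hη = Real.exp (Real.log (K + Hη)) := (Real.exp_log h).symm
        _ ≤ Real.exp L := Real.exp_le_exp.2 hL1
  obtain ⟨m, hm_def⟩ : ∃ m : ℕ, m = ⌈L / (η * Real.log 2)⌉₊ := ⟨_, rfl⟩
  obtain ⟨M, hM_def⟩ : ∃ M : ℕ, M = ⌈L / (((n : ℝ) - α) * Real.log 2)⌉₊ := ⟨_, rfl⟩
  have hmL : L ≤ (m : ℝ) * (η * Real.log 2) := by
    have h1 : L / (η * Real.log 2) ≤ (m : ℝ) := hm_def ▸ Nat.le_ceil _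
    exact (div_le_iff₀ (by positivity)).1 h1
  have hML : L ≤ (M : ℝ) * (((n : ℝ) - α) * Real.log 2) := by
    have h1 : L / (((n : ℝ) - α) * Real.log 2) ≤ (M : ℝ) := hM_def ▸ Nat.le_ceil _
    exact (div_le_iff₀ (by positivity)).1 h1
  obtain ⟨r, hr_def⟩ : ∃ r : ℝ, r = (2⁻¹ : ℝ) ^ m := ⟨_, rfl⟩
  have hr : 0 < r := by rw [hr_def]; positivity
  obtain ⟨R, hR_def⟩ : ∃ R : ℝ, R = (2 : ℝ) ^ M := ⟨_, rfl⟩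
  have hR1 : 1 ≤ R := hR_def ▸ one_le_pow₀ (by norm_num : (1:ℝ) ≤ 2)
  have hR0 : 0 < R := lt_of_lt_of_le one_pos hR1
  have h2NR : (2 : ℝ) ^ (m + M) * r = R := by
    rw [hr_def, hR_def, pow_add, inv_pow]
    have h2m : ((2 : ℝ) ^ m) ≠ 0 := by positivity
    field_simp
  -- the Hölder term is at most 1
  have hHolder1 : Hη * r ^ η ≤ 1 := by
    have hr_eta : r ^ η = Real.exp (-((m : ℝ) * (η * Real.log 2))) := by
      rw [hr_def, ← Real.rpow_natCast (2⁻¹ : ℝ) m, ← Real.rpow_mul (by norm_num),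
        Real.rpow_def_of_pos (by norm_num : (0:ℝ) < 2⁻¹), Real.log_inv]
      congr 1
      ring
    have hHη_le : Hη ≤ Real.exp ((m : ℝ) * (η * Real.log 2)) :=
      le_trans (le_add_of_nonneg_left hK0) (h_expL.trans (Real.exp_le_exp.2 hmL))
    calc Hη * r ^ η ≤ Real.exp ((m : ℝ) * (η * Real.log 2)) * r ^ η :=
          mul_le_mul_of_nonneg_right hHη_le (Real.rpow_nonneg hr.le η)
      _ = 1 := by rw [hr_eta, ← Real.exp_add]; simp
  -- the tail term is at most 2^α/ω
  have hKR : K ≤ R ^ ((n : ℝ) - α) := by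
    have h1 : R ^ ((n : ℝ) - α) = Real.exp ((M : ℝ) * (((n : ℝ) - α) * Real.log 2)) := by
      rw [hR_def, ← Real.rpow_natCast (2 : ℝ) M, ← Real.rpow_mul (by norm_num),
        Real.rpow_def_of_pos (by norm_num : (0:ℝ) < 2)]
      congr 1
      ring
    rw [h1]
    exact le_trans (le_add_of_nonneg_right hHη0) (h_expL.trans (Real.exp_le_exp.2 hML))
  have hTail : (R + 1) ^ α * K / (R ^ n * ω) ≤ 2 ^ α / ω := by
    have h1 : (R + 1) ^ α ≤ 2 ^ α * R ^ α := by
      calc (R + 1) ^ α ≤ (2 * R) ^ α :=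
            Real.rpow_le_rpow (by positivity) (by linarith) hα0.le
        _ = 2 ^ α * R ^ α := Real.mul_rpow (by norm_num) hR0.le
    have h2 : K * R ^ α ≤ R ^ (n : ℝ) := by
      have : R ^ (n : ℝ) = R ^ ((n : ℝ) - α) * R ^ α := by
        rw [← Real.rpow_add hR0]; ring_nf
      rw [this]
      exact mul_le_mul_of_nonneg_right hKR (Real.rpow_nonneg hR0.le α)
    have key : (R + 1) ^ α * K ≤ 2 ^ α * R ^ n := by
      calc (R + 1) ^ α * K ≤ (2 ^ α * R ^ α) * K :=
            mul_le_mul_of_nonneg_right h1 hK0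
        _ = 2 ^ α * (K * R ^ α) := by ring
        _ ≤ 2 ^ α * R ^ (n : ℝ) :=
            mul_le_mul_of_nonneg_left h2 (Real.rpow_nonneg (by norm_num) α)
        _ = 2 ^ α * R ^ n := by rw [Real.rpow_natCast]
    calc (R + 1) ^ α * K / (R ^ n * ω) ≤ (2 ^ α * R ^ n) / (R ^ n * ω) := by gcongr
      _ = 2 ^ α / ω := by
          rw [mul_comm (R ^ n) ω, mul_div_mul_right _ _ (by positivity : (R:ℝ) ^ n ≠ 0)]
  -- assemble
  have htel := BGW_telescope n hn hη0 f hf hHη0 hH hB x hr (m + M)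
  rw [h2NR] at htel
  have htail := BGW_tail n hn hα0 f hf hInt hK x hR1
  rw [← hω_def] at htail
  have hmain : |f x| ≤ 1 + ((m : ℝ) + M) * (2 ^ n * B) + 2 ^ α / ω := by
    calc |f x| = |(f x - ⨍ y in ball x R, f y ∂volume) + ⨍ y in ball x R, f y ∂volume| := by
          ring_nf
      _ ≤ |f x - ⨍ y in ball x R, f y ∂volume| + |⨍ y in ball x R, f y ∂volume| :=
          abs_add_le _ _
      _ ≤ (Hη * r ^ η + (m + M : ℕ) * (2 ^ n * B)) + (R + 1) ^ α * K / (R ^ n * ω) :=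
          add_le_add htel htail
      _ ≤ (1 + ((m : ℝ) + M) * (2 ^ n * B)) + 2 ^ α / ω := by
          push_cast
          exact add_le_add (add_le_add hHolder1 le_rfl) hTail
      _ = 1 + ((m : ℝ) + M) * (2 ^ n * B) + 2 ^ α / ω := by ring
  -- count the steps
  have hN : (m : ℝ) + M ≤ c * L + 2 := by
    have h1 : (m : ℝ) ≤ L / (η * Real.log 2) + 1 := by
      rw [hm_def]; exact le_of_lt (Nat.ceil_lt_add_one (by positivity))
    have h2 : (M : ℝ) ≤ L / (((n : ℝ) - α) * Real.log 2) + 1 := by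
      rw [hM_def]; exact le_of_lt (Nat.ceil_lt_add_one (by positivity))
    have h3 : L / (η * Real.log 2) + L / (((n : ℝ) - α) * Real.log 2) = c * L := by
      rw [hc_def]; field_simp
    linarith
  have h2nB : (0:ℝ) ≤ 2 ^ n * B := by positivity
  have hfinal1 : ((m : ℝ) + M) * (2 ^ n * B) ≤ (c * L + 2) * (2 ^ n * B) :=
    mul_le_mul_of_nonneg_right hN h2nB
  have hcL : c * L + 2 ≤ (c + 2) * (1 + L) := by nlinarith [mul_nonneg hc0.le hL0]
  have hfinal2 : (c * L + 2) * (2 ^ n * B) ≤ ((1 + 2 ^ α / ω) + 2 ^ n * (c + 2)) * B * (1 + L) := by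
    have hb1L : (0:ℝ) ≤ B * (1 + L) := mul_nonneg hB0 (by linarith)
    have e1 : (c * L + 2) * (2 ^ n * B) ≤ ((c + 2) * (1 + L)) * (2 ^ n * B) :=
      mul_le_mul_of_nonneg_right hcL h2nB
    have e2 : ((c + 2) * (1 + L)) * (2 ^ n * B) = (2 ^ n * (c + 2)) * (B * (1 + L)) := by ring
    have e3 : (2 ^ n * (c + 2)) * (B * (1 + L))
        ≤ ((1 + 2 ^ α / ω) + 2 ^ n * (c + 2)) * (B * (1 + L)) := by
      refine mul_le_mul_of_nonneg_right ?_ hb1L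
      have : (0:ℝ) ≤ 1 + 2 ^ α / ω := by positivity
      linarith
    calc (c * L + 2) * (2 ^ n * B) ≤ (2 ^ n * (c + 2)) * (B * (1 + L)) := e2 ▸ e1
      _ ≤ ((1 + 2 ^ α / ω) + 2 ^ n * (c + 2)) * (B * (1 + L)) := e3
      _ = ((1 + 2 ^ α / ω) + 2 ^ n * (c + 2)) * B * (1 + L) := by ring
  have hCge : (1:ℝ) + 2 ^ α / ω ≤ (1 + 2 ^ α / ω) + 2 ^ n * (c + 2) := by
    have : (0:ℝ) ≤ 2 ^ n * (c + 2) := by positivity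
    linarith
  linarith
end

section
/- Let n ≥ 1, η ∈ (0,1), α ∈ (0,n), and let f : ℝ^n → ℝ be continuous with finite Hölder seminorm ‖f‖_{Ċ^η} and finite BMO seminorm. Then for every natural number m_0 ≥ 1, |f(0)| ≤ C·2^{-m_0·min{n-α, η}}·(∫_{ℝ^n} |f(y)|/(|y|+1)^α dy + ‖f‖_{Ċ^η}) + C·m_0·‖f‖_{BMO}, where C depends only on n, η, α. -/
open MeasureTheory Metric Real

set_option maxHeartbeats 1600000 in
/-- Pointwise dyadic estimate behind the BGW inequality with BMO:
`|f(0)| ≤ C 2^{-m₀ min{n-α,η}} (∫ |f(y)|/(|y|+1)^α dy + ‖f‖_{Ċ^η}) + C m₀ ‖f‖_BMO`. -/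
theorem BGW_BMO_pointwise (n : ℕ) (hn : 1 ≤ n) (η α : ℝ)
    (hη : η ∈ Set.Ioo (0 : ℝ) 1) (hα : α ∈ Set.Ioo (0 : ℝ) (n : ℝ)) :
    ∃ C : ℝ, 0 < C ∧
      ∀ (f : EuclideanSpace ℝ (Fin n) → ℝ) (Hη B : ℝ),
        Continuous f →
        (∀ x y, |f x - f y| ≤ Hη * ‖x - y‖ ^ η) →
        (∀ (z : EuclideanSpace ℝ (Fin n)) (r : ℝ), 0 < r →
          ⨍ x in ball z r, |f x - ⨍ y in ball z r, f y ∂volume| ∂volume ≤ B) →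
        Integrable (fun y : EuclideanSpace ℝ (Fin n) => |f y| / (‖y‖ + 1) ^ α) →
        ∀ m₀ : ℕ, 1 ≤ m₀ →
          |f 0| ≤ C * 2 ^ (-(m₀ : ℝ) * min ((n : ℝ) - α) η)
                * ((∫ y, |f y| / (‖y‖ + 1) ^ α ∂volume) + Hη)
              + C * m₀ * B := by
  obtain ⟨hη0, hη1⟩ := hη
  obtain ⟨hα0, hαn⟩ := hα
  haveI : Nonempty (Fin n) := ⟨⟨0, hn⟩⟩
  set ω := (volume (ball (0 : EuclideanSpace ℝ (Fin n)) 1)).toReal with hω_def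
  have hω : 0 < ω := by
    rw [hω_def]
    exact ENNReal.toReal_pos (measure_ball_pos volume _ one_pos).ne' measure_ball_lt_top.ne
  refine ⟨2 ^ (n + 1) + 2 ^ α / ω, by positivity, ?_⟩
  intro f Hη B hf hHolder hBMO hInt m₀ hm₀
  set C : ℝ := 2 ^ (n + 1) + 2 ^ α / ω with hC_def
  have hC1 : (1 : ℝ) ≤ C := by
    rw [hC_def]
    have h1 : (1:ℝ) ≤ 2 ^ (n+1) := one_le_pow₀ (by norm_num)
    have h2 : (0:ℝ) ≤ 2 ^ α / ω := by positivity
    linarith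
  set I : ℝ := ∫ y, |f y| / (‖y‖ + 1) ^ α ∂volume with hI_def
  have hI0 : 0 ≤ I := integral_nonneg fun y => by positivity
  clear_value C I
  have hHη0 : 0 ≤ Hη := by
    have h := hHolder 0 (EuclideanSpace.single ⟨0, hn⟩ (1 : ℝ))
    have hnorm : ‖(0 : EuclideanSpace ℝ (Fin n)) - EuclideanSpace.single ⟨0, hn⟩ (1 : ℝ)‖ = 1 := by
      rw [zero_sub, norm_neg, EuclideanSpace.norm_single]; norm_num
    rw [hnorm, Real.one_rpow, mul_one] at h
    exact le_trans (abs_nonneg _) h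
  have hB0 : 0 ≤ B := by
    refine le_trans ?_ (hBMO 0 1 one_pos)
    rw [setAverage_eq, smul_eq_mul]
    exact mul_nonneg (by positivity) (integral_nonneg fun y => abs_nonneg _)
  have hvol : ∀ r : ℝ, 0 < r →
      (volume (ball (0 : EuclideanSpace ℝ (Fin n)) r)).toReal = r ^ n * ω := by
    intro r hr
    rw [Measure.addHaar_ball volume _ hr.le, ENNReal.toReal_mul,
      ENNReal.toReal_ofReal (by positivity), ← hω_def, finrank_euclideanSpace_fin]
  have hfi : ∀ (z : EuclideanSpace ℝ (Fin n)) (r : ℝ), IntegrableOn f (ball z r) volume :=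
    fun z r => (hf.continuousOn.integrableOn_compact
      (isCompact_closedBall z r)).mono_set ball_subset_closedBall
  set A : ℝ → ℝ := fun r => ⨍ y in ball (0 : EuclideanSpace ℝ (Fin n)) r, f y ∂volume with hA_def
  have hA : ∀ r : ℝ, 0 < r →
      A r = (r ^ n * ω)⁻¹ * ∫ y in ball (0 : EuclideanSpace ℝ (Fin n)) r, f y ∂volume := by
    intro r hr
    rw [hA_def]
    simp only [setAverage_eq, smul_eq_mul, measureReal_def, hvol r hr]
  -- dyadic step
  have hstep : ∀ r : ℝ, 0 < r → |A r - A (2 * r)| ≤ 2 ^ n * B := by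
    intro r hr
    have h2r : (0:ℝ) < 2 * r := by linarith
    have hvpos : (0:ℝ) < r ^ n * ω := by positivity
    have hvpos2 : (0:ℝ) < (2*r) ^ n * ω := by positivity
    have hconst : IntegrableOn (fun _ : EuclideanSpace ℝ (Fin n) => A (2*r))
        (ball (0 : EuclideanSpace ℝ (Fin n)) r) volume :=
      integrableOn_const measure_ball_lt_top.ne
    have hint2 : IntegrableOn (fun y => |f y - A (2*r)|)
        (ball (0 : EuclideanSpace ℝ (Fin n)) (2*r)) volume :=
      ((hfi 0 (2*r)).sub (integrableOn_const measure_ball_lt_top.ne)).abs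
    have key : A r - A (2*r) = (r ^ n * ω)⁻¹ *
        ∫ y in ball (0 : EuclideanSpace ℝ (Fin n)) r, (f y - A (2*r)) ∂volume := by
      rw [integral_sub (hfi 0 r) hconst, setIntegral_const, smul_eq_mul, measureReal_def, hvol r hr, hA r hr]
      field_simp
    have h1 : |∫ y in ball (0 : EuclideanSpace ℝ (Fin n)) r, (f y - A (2*r)) ∂volume|
        ≤ ∫ y in ball (0 : EuclideanSpace ℝ (Fin n)) (2*r), |f y - A (2*r)| ∂volume := by
      calc |∫ y in ball (0 : EuclideanSpace ℝ (Fin n)) r, (f y - A (2*r)) ∂volume|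
          ≤ ∫ y in ball (0 : EuclideanSpace ℝ (Fin n)) r, |f y - A (2*r)| ∂volume := by
            simpa using norm_integral_le_integral_norm
              (μ := volume.restrict (ball (0 : EuclideanSpace ℝ (Fin n)) r))
              (fun y => f y - A (2*r))
        _ ≤ _ := setIntegral_mono_set hint2
            (Filter.Eventually.of_forall fun y => abs_nonneg _)
            (HasSubset.Subset.eventuallyLE (ball_subset_ball (by linarith)))
    have h2 : ∫ y in ball (0 : EuclideanSpace ℝ (Fin n)) (2*r), |f y - A (2*r)| ∂volume
        ≤ (2*r) ^ n * ω * B := by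
      have h := hBMO 0 (2*r) h2r
      rw [setAverage_eq, smul_eq_mul, measureReal_def, hvol _ h2r] at h
      rw [← inv_mul_le_iff₀ hvpos2]
      exact h
    rw [key, abs_mul, abs_of_nonneg (le_of_lt (inv_pos.2 hvpos))]
    calc (r ^ n * ω)⁻¹ * |∫ y in ball (0 : EuclideanSpace ℝ (Fin n)) r, (f y - A (2*r)) ∂volume|
        ≤ (r ^ n * ω)⁻¹ * ((2*r) ^ n * ω * B) :=
          mul_le_mul_of_nonneg_left (le_trans h1 h2) (le_of_lt (inv_pos.2 hvpos))
      _ = 2 ^ n * B := by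
          rw [mul_pow]
          field_simp
  -- Hölder step
  have hholder : ∀ r : ℝ, 0 < r → |f 0 - A r| ≤ Hη * r ^ η := by
    intro r hr
    have hvpos : (0:ℝ) < r ^ n * ω := by positivity
    have hconst : IntegrableOn (fun _ : EuclideanSpace ℝ (Fin n) => f 0)
        (ball (0 : EuclideanSpace ℝ (Fin n)) r) volume :=
      integrableOn_const measure_ball_lt_top.ne
    have key : f 0 - A r = (r ^ n * ω)⁻¹ *
        ∫ y in ball (0 : EuclideanSpace ℝ (Fin n)) r, (f 0 - f y) ∂volume := by
      rw [integral_sub hconst (hfi 0 r), setIntegral_const, smul_eq_mul, measureReal_def, hvol r hr, hA r hr]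
      field_simp
    have h1 : |∫ y in ball (0 : EuclideanSpace ℝ (Fin n)) r, (f 0 - f y) ∂volume|
        ≤ ∫ y in ball (0 : EuclideanSpace ℝ (Fin n)) r, (Hη * r ^ η) ∂volume := by
      refine le_trans (by
        simpa using norm_integral_le_integral_norm
          (μ := volume.restrict (ball (0 : EuclideanSpace ℝ (Fin n)) r))
          (fun y => f 0 - f y)) ?_
      refine setIntegral_mono_on (hconst.sub (hfi 0 r)).abs
        (integrableOn_const measure_ball_lt_top.ne) measurableSet_ball ?_
      intro y hy
      refine le_trans (hHolder 0 y) ?_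
      have hyr : ‖(0 : EuclideanSpace ℝ (Fin n)) - y‖ ≤ r := by
        rw [zero_sub, norm_neg]
        exact le_of_lt (mem_ball_zero_iff.1 hy)
      exact mul_le_mul_of_nonneg_left
        (Real.rpow_le_rpow (norm_nonneg _) hyr (le_of_lt hη0)) hHη0
    rw [key, abs_mul, abs_of_nonneg (le_of_lt (inv_pos.2 hvpos))]
    rw [setIntegral_const, smul_eq_mul, measureReal_def, hvol r hr] at h1
    calc (r ^ n * ω)⁻¹ * |∫ y in ball (0 : EuclideanSpace ℝ (Fin n)) r, (f 0 - f y) ∂volume|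
        ≤ (r ^ n * ω)⁻¹ * (r ^ n * ω * (Hη * r ^ η)) :=
          mul_le_mul_of_nonneg_left h1 (le_of_lt (inv_pos.2 hvpos))
      _ = Hη * r ^ η := by field_simp
  -- outer step
  have houter : ∀ R : ℝ, 1 ≤ R → |A R| ≤ 2 ^ α * (R ^ α / R ^ n) / ω * I := by
    intro R hR
    have hR0 : (0:ℝ) < R := lt_of_lt_of_le one_pos hR
    have hvpos : (0:ℝ) < R ^ n * ω := by positivity
    have h1 : |A R| ≤ (R ^ n * ω)⁻¹ *
        ∫ y in ball (0 : EuclideanSpace ℝ (Fin n)) R, |f y| ∂volume := by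
      rw [hA R hR0, abs_mul, abs_of_nonneg (le_of_lt (inv_pos.2 hvpos))]
      refine mul_le_mul_of_nonneg_left ?_ (le_of_lt (inv_pos.2 hvpos))
      simpa using norm_integral_le_integral_norm
        (μ := volume.restrict (ball (0 : EuclideanSpace ℝ (Fin n)) R)) f
    have h2 : ∫ y in ball (0 : EuclideanSpace ℝ (Fin n)) R, |f y| ∂volume
        ≤ (2*R) ^ α * I := by
      calc ∫ y in ball (0 : EuclideanSpace ℝ (Fin n)) R, |f y| ∂volume
          ≤ ∫ y in ball (0 : EuclideanSpace ℝ (Fin n)) R,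
              (2*R) ^ α * (|f y| / (‖y‖ + 1) ^ α) ∂volume := by
            refine setIntegral_mono_on (hfi 0 R).abs
              ((hInt.const_mul _).integrableOn) measurableSet_ball ?_
            intro y hy
            have hy1 : ‖y‖ + 1 ≤ 2 * R := by
              have := mem_ball_zero_iff.1 hy
              linarith
            have hbase : (0:ℝ) < ‖y‖ + 1 := by positivity
            have hrp : (‖y‖ + 1) ^ α ≤ (2*R) ^ α :=
              Real.rpow_le_rpow (le_of_lt hbase) hy1 (le_of_lt hα0)
            rw [mul_div_assoc', le_div_iff₀ (by positivity)]
            nlinarith [mul_le_mul_of_nonneg_left hrp (abs_nonneg (f y))]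
        _ = (2*R) ^ α * ∫ y in ball (0 : EuclideanSpace ℝ (Fin n)) R,
              |f y| / (‖y‖ + 1) ^ α ∂volume := integral_const_mul _ _
        _ ≤ (2*R) ^ α * I := by
            refine mul_le_mul_of_nonneg_left ?_ (by positivity)
            rw [hI_def]
            exact setIntegral_le_integral hInt
              (Filter.Eventually.of_forall fun y => by positivity)
    have h3 : (2*R) ^ α = 2 ^ α * R ^ α :=
      Real.mul_rpow (by norm_num) (le_of_lt hR0)
    calc |A R| ≤ (R ^ n * ω)⁻¹ * ((2*R) ^ α * I) :=
          le_trans h1 (mul_le_mul_of_nonneg_left h2 (le_of_lt (inv_pos.2 hvpos)))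
      _ = 2 ^ α * (R ^ α / R ^ n) / ω * I := by
          rw [h3]; field_simp
  clear_value A ω
  -- telescoping
  set P : ℝ := 2 ^ (-(m₀ : ℝ) * min ((n : ℝ) - α) η) with hP_def
  have hP0 : (0:ℝ) ≤ P := le_of_lt (Real.rpow_pos_of_pos two_pos _)
  clear_value P
  set g : ℕ → ℝ := fun k => A (2 ^ ((k : ℝ) - m₀)) with hg_def
  clear_value g
  have htel : f 0 = (f 0 - g 0) + (∑ i ∈ Finset.range (2*m₀), (g i - g (i+1))) + g (2*m₀) := by
    rw [Finset.sum_range_sub']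
    ring
  have hmin1 : min ((n : ℝ) - α) η ≤ (n : ℝ) - α := min_le_left _ _
  have hmin2 : min ((n : ℝ) - α) η ≤ η := min_le_right _ _
  have hm0R : (0:ℝ) ≤ (m₀ : ℝ) := Nat.cast_nonneg _
  have hT1 : |f 0 - g 0| ≤ Hη * P := by
    have hr : (0:ℝ) < 2 ^ ((0 : ℝ) - m₀) := Real.rpow_pos_of_pos two_pos _
    have h := hholder _ hr
    have hexp : ((2:ℝ) ^ ((0 : ℝ) - m₀)) ^ η = 2 ^ (((0:ℝ) - m₀) * η) :=
      (Real.rpow_mul (by norm_num) _ _).symm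
    have hle : (2:ℝ) ^ (((0:ℝ) - m₀) * η) ≤ P := by
      rw [hP_def]
      refine Real.rpow_le_rpow_of_exponent_le (by norm_num) ?_
      have hmm : (m₀:ℝ) * min ((n : ℝ) - α) η ≤ (m₀:ℝ) * η :=
        mul_le_mul_of_nonneg_left hmin2 hm0R
      linarith
    have hg0 : g 0 = A (2 ^ ((0:ℝ) - m₀)) := by rw [hg_def]; norm_num
    rw [hg0]
    calc |f 0 - A (2 ^ ((0:ℝ) - m₀))| ≤ Hη * ((2:ℝ) ^ ((0 : ℝ) - m₀)) ^ η := h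
      _ = Hη * 2 ^ (((0:ℝ) - m₀) * η) := by rw [hexp]
      _ ≤ Hη * P := mul_le_mul_of_nonneg_left hle hHη0
  have hT2 : ∑ i ∈ Finset.range (2*m₀), |g i - g (i+1)| ≤ (2*m₀ : ℝ) * (2 ^ n * B) := by
    calc ∑ i ∈ Finset.range (2*m₀), |g i - g (i+1)|
        ≤ ∑ _i ∈ Finset.range (2*m₀), (2 ^ n * B : ℝ) := by
          refine Finset.sum_le_sum fun i _ => ?_
          have hr : (0:ℝ) < 2 ^ ((i : ℝ) - m₀) := Real.rpow_pos_of_pos two_pos _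
          have harg : ((i+1 : ℕ) : ℝ) - m₀ = ((i : ℝ) - m₀) + 1 := by push_cast; ring
          have hgi1 : g (i+1) = A (2 * 2 ^ ((i : ℝ) - m₀)) := by
            rw [hg_def]
            simp only
            rw [harg, Real.rpow_add two_pos, Real.rpow_one]
            ring_nf
          have hgi : g i = A (2 ^ ((i : ℝ) - m₀)) := by rw [hg_def]
          rw [hgi, hgi1]
          exact hstep _ hr
      _ = (2*m₀ : ℝ) * (2 ^ n * B) := by
          rw [Finset.sum_const, Finset.card_range, nsmul_eq_mul]
          push_cast; ring
  have hT3 : |g (2*m₀)| ≤ 2 ^ α / ω * P * I := by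
    have hR : (1:ℝ) ≤ 2 ^ ((m₀:ℝ)) := Real.one_le_rpow (by norm_num) (by positivity)
    have hg2 : g (2*m₀) = A (2 ^ ((m₀:ℝ))) := by
      rw [hg_def]
      simp only
      congr 1
      push_cast
      ring
    have h := houter _ hR
    rw [hg2]
    refine le_trans h ?_
    have hpow : ((2:ℝ) ^ ((m₀:ℝ))) ^ α / ((2:ℝ) ^ ((m₀:ℝ))) ^ n
        = 2 ^ (-(m₀:ℝ) * ((n:ℝ) - α)) := by
      rw [← Real.rpow_natCast ((2:ℝ) ^ ((m₀:ℝ))) n,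
        ← Real.rpow_mul (by norm_num), ← Real.rpow_mul (by norm_num),
        ← Real.rpow_sub two_pos]
      ring_nf
    have hle : (2:ℝ) ^ (-(m₀:ℝ) * ((n:ℝ) - α)) ≤ P := by
      rw [hP_def]
      refine Real.rpow_le_rpow_of_exponent_le (by norm_num) ?_
      have hmm : (m₀:ℝ) * min ((n : ℝ) - α) η ≤ (m₀:ℝ) * ((n:ℝ) - α) :=
        mul_le_mul_of_nonneg_left hmin1 hm0R
      linarith
    rw [hpow]
    calc (2:ℝ) ^ α * 2 ^ (-(m₀:ℝ) * ((n:ℝ) - α)) / ω * I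
        ≤ 2 ^ α * P / ω * I := by gcongr
      _ = 2 ^ α / ω * P * I := by ring
  -- assemble
  have hsum : |f 0| ≤ Hη * P + (2*m₀ : ℝ) * (2 ^ n * B) + 2 ^ α / ω * P * I := by
    calc |f 0| = |(f 0 - g 0) + (∑ i ∈ Finset.range (2*m₀), (g i - g (i+1))) + g (2*m₀)| := by
          rw [← htel]
      _ ≤ |f 0 - g 0| + |∑ i ∈ Finset.range (2*m₀), (g i - g (i+1))| + |g (2*m₀)| :=
          abs_add_three _ _ _
      _ ≤ Hη * P + (2*m₀ : ℝ) * (2 ^ n * B) + 2 ^ α / ω * P * I :=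
          add_le_add (add_le_add hT1
            (le_trans (Finset.abs_sum_le_sum_abs _ _) hT2)) hT3
  refine le_trans hsum ?_
  have h2α0 : (0:ℝ) < (2:ℝ) ^ α := Real.rpow_pos_of_pos two_pos _
  have e1 : Hη * P ≤ C * P * Hη := by
    have h := mul_le_mul_of_nonneg_right hC1 (mul_nonneg hP0 hHη0)
    linarith
  have e2 : 2 ^ α / ω * P * I ≤ C * P * I := by
    have hc : (2:ℝ) ^ α / ω ≤ C := by
      rw [hC_def]
      have : (0:ℝ) < 2 ^ (n+1) := pow_pos two_pos _
      linarith
    have h := mul_le_mul_of_nonneg_right hc (mul_nonneg hP0 hI0)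
    linarith [h]
  have e3 : (2*m₀ : ℝ) * (2 ^ n * B) ≤ C * m₀ * B := by
    have h2n : (2:ℝ) * 2 ^ n ≤ C := by
      rw [hC_def, pow_succ]
      have : (0:ℝ) ≤ 2 ^ α / ω := by positivity
      linarith
    have h := mul_le_mul_of_nonneg_right h2n (mul_nonneg hm0R hB0)
    linarith [h]
  nlinarith [e1, e2, e3]
end

section
/- Let n ≥ 1, η ∈ (0,1), α ∈ (0,n), and R ≥ 1. There exists a constant C = C(n, η, α) such that for every f with finite Hölder seminorm ‖f‖_{Ċ^η}, finite BMO seminorm, and support contained in the ball B(0,R), one has ‖f‖_{L^∞} ≤ C + C‖f‖_{BMO}(1 + log⁺[R^{n-α+η} + ‖f‖_{Ċ^η}]). -/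
open MeasureTheory Metric Real

lemma BGW_holder_continuous {n : ℕ} {f : EuclideanSpace ℝ (Fin n) → ℝ} {Hη η : ℝ}
    (hη : 0 < η) (hH : 0 ≤ Hη)
    (h : ∀ x y, |f x - f y| ≤ Hη * ‖x - y‖ ^ η) : Continuous f := by
  have hold : HolderWith Hη.toNNReal η.toNNReal f := by
    intro x y
    calc edist (f x) (f y) = ENNReal.ofReal |f x - f y| := by
          rw [edist_dist, Real.dist_eq]
      _ ≤ ENNReal.ofReal (Hη * ‖x - y‖ ^ η) := ENNReal.ofReal_le_ofReal (h x y)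
      _ = ENNReal.ofReal Hη * ENNReal.ofReal (‖x - y‖ ^ η) := ENNReal.ofReal_mul hH
      _ = ↑Hη.toNNReal * edist x y ^ ((η.toNNReal : ℝ)) := by
          rw [edist_dist, dist_eq_norm, Real.coe_toNNReal η hη.le,
            ENNReal.ofReal_rpow_of_nonneg (norm_nonneg _) hη.le]
          rfl
  exact hold.continuous (Real.toNNReal_pos.2 hη)

set_option maxHeartbeats 1000000 in
/-- BGW inequality with BMO for compactly supported functions:
`‖f‖_∞ ≤ C + C‖f‖_BMO (1 + log⁺[R^{n-α+η} + ‖f‖_{Ċ^η}])`. -/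
theorem BGW_BMO_compact_support (n : ℕ) (hn : 1 ≤ n) (η α R : ℝ)
    (hη : η ∈ Set.Ioo (0 : ℝ) 1) (hα : α ∈ Set.Ioo (0 : ℝ) (n : ℝ)) (hR : 1 ≤ R) :
    ∃ C : ℝ, 0 < C ∧
      ∀ (f : EuclideanSpace ℝ (Fin n) → ℝ) (Hη B : ℝ),
        (∀ x y, |f x - f y| ≤ Hη * ‖x - y‖ ^ η) →
        (∀ (z : EuclideanSpace ℝ (Fin n)) (r : ℝ), 0 < r →
          ⨍ x in ball z r, |f x - ⨍ y in ball z r, f y ∂volume| ∂volume ≤ B) →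
        Function.support f ⊆ ball (0 : EuclideanSpace ℝ (Fin n)) R →
        ∀ x, |f x| ≤ C + C * B
            * (1 + max (Real.log (R ^ ((n : ℝ) - α + η) + Hη)) 0) := by
  have hη0 : (0:ℝ) < η := hη.1
  have hη1 : η < 1 := hη.2
  have hn0 : (0:ℝ) < n := by exact_mod_cast hn
  set β : ℝ := (n : ℝ) - α + η with hβdef
  have hβ : 0 < β := by
    have := hα.2
    simp only [hβdef]; linarith
  set K : ℝ := ((η + n) / β + 1 + n / η) with hKdef
  have hK : 0 < K := by
    have h1 : 0 < (η + n) / β := div_pos (by linarith) hβ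
    have h2 : 0 < (n:ℝ) / η := div_pos hn0 hη0
    simp only [hKdef]; linarith
  set K' : ℝ := K / ((n:ℝ) * Real.log 2) with hK'def
  have hlog2 : 0 < Real.log 2 := Real.log_pos (by norm_num)
  have hK' : 0 < K' := div_pos hK (by positivity)
  refine ⟨2 + 2 ^ n * (2 + K'), by positivity, ?_⟩
  intro f Hη B hf hB hsupp x
  -- basic positivity facts
  have hHnn : 0 ≤ Hη := by
    have h01 := hf 0 (EuclideanSpace.single (⟨0, hn⟩ : Fin n) (1:ℝ))
    have hnorm : ‖(0 : EuclideanSpace ℝ (Fin n)) -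
        EuclideanSpace.single (⟨0, hn⟩ : Fin n) (1:ℝ)‖ = 1 := by
      rw [zero_sub, norm_neg, EuclideanSpace.norm_single]; norm_num
    rw [hnorm, Real.one_rpow, mul_one] at h01
    exact (abs_nonneg _).trans h01
  have hcont : Continuous f := BGW_holder_continuous hη0 hHnn hf
  have hint : ∀ (z : EuclideanSpace ℝ (Fin n)) (ρ : ℝ),
      IntegrableOn f (ball z ρ) volume := by
    intro z ρ
    exact ((hcont.locallyIntegrable).integrableOn_isCompact
      (isCompact_closedBall z ρ)).mono_set ball_subset_closedBall
  -- volume facts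
  set V1 : ℝ := (volume (ball (0 : EuclideanSpace ℝ (Fin n)) 1)).toReal with hV1def
  have hV1 : 0 < V1 := by
    rw [hV1def]
    exact ENNReal.toReal_pos (measure_ball_pos volume _ one_pos).ne' measure_ball_lt_top.ne
  have hvol : ∀ (z : EuclideanSpace ℝ (Fin n)) (ρ : ℝ), 0 < ρ →
      (volume (ball z ρ)).toReal = ρ ^ n * V1 := by
    intro z ρ hρ
    rw [Measure.addHaar_ball_of_pos volume z hρ, finrank_euclideanSpace_fin,
      ENNReal.toReal_mul, ENNReal.toReal_ofReal (by positivity), hV1def]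
  have hvolpos : ∀ (z : EuclideanSpace ℝ (Fin n)) (ρ : ℝ), 0 < ρ →
      0 < (volume (ball z ρ)).toReal := by
    intro z ρ hρ; rw [hvol z ρ hρ]; positivity
  -- average as integral
  have havg : ∀ (g : EuclideanSpace ℝ (Fin n) → ℝ) (ρ : ℝ),
      ⨍ y in ball x ρ, g y ∂volume
        = ((volume (ball x ρ)).toReal)⁻¹ * ∫ y in ball x ρ, g y ∂volume := by
    intro g ρ; rw [setAverage_eq, smul_eq_mul, measureReal_def]
  set A : ℝ → ℝ := fun ρ => ⨍ y in ball x ρ, f y ∂volume with hAdef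
  have havgA : ∀ ρ : ℝ, A ρ
      = ((volume (ball x ρ)).toReal)⁻¹ * ∫ y in ball x ρ, f y ∂volume :=
    fun ρ => havg f ρ
  have hBnn : 0 ≤ B := by
    refine le_trans ?_ (hB x 1 one_pos)
    rw [setAverage_eq, smul_eq_mul]
    have : 0 ≤ ∫ y in ball x 1, |f y - A 1| ∂volume :=
      integral_nonneg fun y => abs_nonneg _
    positivity
  -- Step A : closeness to small averages
  have stepA : ∀ r : ℝ, 0 < r → |f x - A r| ≤ Hη * r ^ η := by
    intro r hr
    have hV := hvolpos x r hr
    have hc : IntegrableOn (fun _ => f x) (ball x r) volume :=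
      integrableOn_const measure_ball_lt_top.ne
    have key : f x - A r
        = ((volume (ball x r)).toReal)⁻¹ * ∫ y in ball x r, (f x - f y) ∂volume := by
      have hsub : ∫ y in ball x r, (f x - f y) ∂volume
          = ((volume (ball x r)).toReal) * f x - ∫ y in ball x r, f y ∂volume := by
        rw [integral_sub hc (hint x r), setIntegral_const, smul_eq_mul, measureReal_def]
      rw [hsub, havgA r, mul_sub, ← mul_assoc, inv_mul_cancel₀ hV.ne', one_mul]
    rw [key, abs_mul, abs_of_nonneg (inv_nonneg.2 hV.le)]
    have hbound : |∫ y in ball x r, (f x - f y) ∂volume| ≤ (Hη * r ^ η) * (volume (ball x r)).toReal := by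
      have hb : ∀ y ∈ ball x r, ‖f x - f y‖ ≤ Hη * r ^ η := by
        intro y hy
        rw [Real.norm_eq_abs]
        refine (hf x y).trans (mul_le_mul_of_nonneg_left ?_ hHnn)
        have h5 : ‖x - y‖ < r := by rwa [← dist_eq_norm, ← mem_ball']
        exact Real.rpow_le_rpow (norm_nonneg _) h5.le hη0.le
      simpa [Real.norm_eq_abs, measureReal_def] using
        norm_setIntegral_le_of_norm_le_const (f := fun y => f x - f y)
          measure_ball_lt_top hb
    calc ((volume (ball x r)).toReal)⁻¹ * |∫ y in ball x r, (f x - f y) ∂volume|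
        ≤ ((volume (ball x r)).toReal)⁻¹ * ((Hη * r ^ η) * (volume (ball x r)).toReal) :=
          mul_le_mul_of_nonneg_left hbound (inv_nonneg.2 hV.le)
      _ = Hη * r ^ η := by field_simp
  -- Step B : doubling
  have stepB : ∀ r : ℝ, 0 < r → |A r - A (2 * r)| ≤ 2 ^ n * B := by
    intro r hr
    have hV := hvolpos x r hr
    have hV2 := hvolpos x (2 * r) (by linarith)
    have hc : IntegrableOn (fun _ => A (2 * r)) (ball x r) volume :=
      integrableOn_const measure_ball_lt_top.ne
    have key : A r - A (2 * r)
        = ((volume (ball x r)).toReal)⁻¹ * ∫ y in ball x r, (f y - A (2 * r)) ∂volume := by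
      have hsub : ∫ y in ball x r, (f y - A (2 * r)) ∂volume
          = (∫ y in ball x r, f y ∂volume) - ((volume (ball x r)).toReal) * A (2 * r) := by
        rw [integral_sub (hint x r) hc, setIntegral_const, smul_eq_mul, measureReal_def]
      rw [hsub, havgA r, mul_sub, ← mul_assoc, inv_mul_cancel₀ hV.ne', one_mul]
    rw [key, abs_mul, abs_of_nonneg (inv_nonneg.2 hV.le)]
    have hball : ball x r ⊆ ball x (2 * r) := ball_subset_ball (by linarith)
    have hintabs : IntegrableOn (fun y => |f y - A (2 * r)|) (ball x (2 * r)) volume :=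
      ((hint x (2*r)).sub (integrableOn_const measure_ball_lt_top.ne)).abs
    have h1 : |∫ y in ball x r, (f y - A (2 * r)) ∂volume|
        ≤ ∫ y in ball x r, |f y - A (2 * r)| ∂volume := by
      simpa [Real.norm_eq_abs] using
        norm_integral_le_integral_norm (μ := volume.restrict (ball x r))
          (fun y => f y - A (2 * r))
    have h2 : ∫ y in ball x r, |f y - A (2 * r)| ∂volume
        ≤ ∫ y in ball x (2 * r), |f y - A (2 * r)| ∂volume := by
      refine setIntegral_mono_set hintabs ?_ (HasSubset.Subset.eventuallyLE hball)
      exact Filter.Eventually.of_forall fun y => abs_nonneg _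
    have h3 : ∫ y in ball x (2 * r), |f y - A (2 * r)| ∂volume
        ≤ B * (volume (ball x (2 * r))).toReal := by
      have := hB x (2 * r) (by linarith)
      rw [havg] at this
      have h4 : ((volume (ball x (2 * r))).toReal)⁻¹
          * ∫ y in ball x (2 * r), |f y - A (2 * r)| ∂volume ≤ B := this
      calc ∫ y in ball x (2 * r), |f y - A (2 * r)| ∂volume
          = (volume (ball x (2 * r))).toReal * (((volume (ball x (2 * r))).toReal)⁻¹
            * ∫ y in ball x (2 * r), |f y - A (2 * r)| ∂volume) := by
            rw [← mul_assoc, mul_inv_cancel₀ hV2.ne', one_mul]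
        _ ≤ (volume (ball x (2 * r))).toReal * B :=
            mul_le_mul_of_nonneg_left h4 hV2.le
        _ = B * (volume (ball x (2 * r))).toReal := mul_comm _ _
    calc ((volume (ball x r)).toReal)⁻¹ * |∫ y in ball x r, (f y - A (2 * r)) ∂volume|
        ≤ ((volume (ball x r)).toReal)⁻¹ * (B * (volume (ball x (2 * r))).toReal) :=
          mul_le_mul_of_nonneg_left ((h1.trans h2).trans h3) (inv_nonneg.2 hV.le)
      _ = 2 ^ n * B := by
          rw [hvol x r hr, hvol x (2 * r) (by linarith), mul_pow]
          field_simp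
  -- Step C : telescoping
  have stepC : ∀ (r : ℝ), 0 < r → ∀ (N : ℕ), |A r - A (2 ^ N * r)| ≤ N * (2 ^ n * B) := by
    intro r hr N
    induction N with
    | zero => simp
    | succ m ih =>
      have h2m : (0:ℝ) < 2 ^ m * r := by positivity
      have : (2:ℝ) ^ (m + 1) * r = 2 * (2 ^ m * r) := by ring
      calc |A r - A (2 ^ (m+1) * r)|
          ≤ |A r - A (2 ^ m * r)| + |A (2 ^ m * r) - A (2 ^ (m+1) * r)| := by
            have := abs_sub_le (A r) (A (2 ^ m * r)) (A (2 ^ (m+1) * r)); linarith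
        _ ≤ m * (2 ^ n * B) + 2 ^ n * B := by
            refine add_le_add ih ?_
            rw [this]; exact stepB _ h2m
        _ = (m + 1 : ℕ) * (2 ^ n * B) := by push_cast; ring
  -- pointwise bound on f
  set M : ℝ := Hη * (2 * R) ^ η with hMdef
  have hMnn : 0 ≤ M := by
    have : (0:ℝ) ≤ (2 * R) ^ η := Real.rpow_nonneg (by linarith) η
    exact mul_nonneg hHnn this
  have hMb : ∀ y, |f y| ≤ M := by
    intro y
    by_cases hy : f y = 0
    · rw [hy, abs_zero]; exact hMnn
    · have hy' : y ∈ ball (0 : EuclideanSpace ℝ (Fin n)) R := hsupp hy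
      set e : EuclideanSpace ℝ (Fin n) := EuclideanSpace.single (⟨0, hn⟩ : Fin n) (1:ℝ) with hedef
      have he : ‖e‖ = 1 := by rw [hedef, EuclideanSpace.norm_single]; norm_num
      set z : EuclideanSpace ℝ (Fin n) := y + (2 * R) • e with hzdef
      have hz : f z = 0 := by
        by_contra hc
        have : z ∈ ball (0 : EuclideanSpace ℝ (Fin n)) R := hsupp hc
        rw [mem_ball_zero_iff] at this hy'
        have h0 : (2 * R) • e = z - y := by rw [hzdef]; abel
        have h1 : ‖(2 * R) • e‖ ≤ ‖z‖ + ‖y‖ := by rw [h0]; exact norm_sub_le _ _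
        rw [norm_smul, he, mul_one, Real.norm_eq_abs, abs_of_nonneg (by linarith)] at h1
        linarith
      have hnz : ‖y - z‖ = 2 * R := by
        rw [hzdef]
        simp only [sub_add_cancel_left, norm_neg]
        rw [norm_smul, he, mul_one, Real.norm_eq_abs, abs_of_nonneg (by linarith)]
      have := hf y z
      rw [hz, sub_zero, hnz] at this
      exact this
  -- Step E : large-ball average bound
  have stepE : ∀ ρ : ℝ, 0 < ρ → |A ρ| ≤ M * R ^ n / ρ ^ n := by
    intro ρ hρ
    have hV := hvolpos x ρ hρ
    rw [havgA, abs_mul, abs_of_nonneg (inv_nonneg.2 hV.le)]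
    set g : EuclideanSpace ℝ (Fin n) → ℝ :=
      (ball (0 : EuclideanSpace ℝ (Fin n)) R).indicator (fun _ => M) with hgdef
    have hgint : IntegrableOn g (ball x ρ) volume := by
      refine Integrable.integrableOn ?_
      rw [hgdef]
      exact (integrable_indicator_iff measurableSet_ball).2
        (integrableOn_const measure_ball_lt_top.ne)
    have h1 : |∫ y in ball x ρ, f y ∂volume| ≤ ∫ y in ball x ρ, |f y| ∂volume := by
      simpa [Real.norm_eq_abs] using
        norm_integral_le_integral_norm (μ := volume.restrict (ball x ρ)) f
    have h2 : ∫ y in ball x ρ, |f y| ∂volume ≤ ∫ y in ball x ρ, g y ∂volume := by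
      refine setIntegral_mono_on (hint x ρ).abs hgint measurableSet_ball ?_
      intro y _
      by_cases hy : y ∈ ball (0 : EuclideanSpace ℝ (Fin n)) R
      · rw [hgdef, Set.indicator_of_mem hy]; exact hMb y
      · have : f y = 0 := by
          by_contra hc; exact hy (hsupp hc)
        rw [this, abs_zero, hgdef, Set.indicator_of_notMem hy]
    have h3 : ∫ y in ball x ρ, g y ∂volume ≤ M * (R ^ n * V1) := by
      rw [hgdef, integral_indicator measurableSet_ball]
      rw [setIntegral_const, smul_eq_mul, measureReal_def, Measure.restrict_apply measurableSet_ball]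
      have hmono : (volume (ball x ρ ∩ ball (0 : EuclideanSpace ℝ (Fin n)) R)).toReal
          ≤ (volume (ball (0 : EuclideanSpace ℝ (Fin n)) R)).toReal := by
        refine ENNReal.toReal_mono measure_ball_lt_top.ne (measure_mono Set.inter_subset_right)
      rw [Set.inter_comm] at hmono
      calc (volume (ball (0 : EuclideanSpace ℝ (Fin n)) R ∩ ball x ρ)).toReal * M
          ≤ (volume (ball (0 : EuclideanSpace ℝ (Fin n)) R)).toReal * M := by
            refine mul_le_mul_of_nonneg_right ?_ hMnn
            exact ENNReal.toReal_mono measure_ball_lt_top.ne (measure_mono Set.inter_subset_left)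
        _ = M * (R ^ n * V1) := by rw [hvol 0 R (by linarith)]; ring
    calc ((volume (ball x ρ)).toReal)⁻¹ * |∫ y in ball x ρ, f y ∂volume|
        ≤ ((volume (ball x ρ)).toReal)⁻¹ * (M * (R ^ n * V1)) :=
          mul_le_mul_of_nonneg_left ((h1.trans h2).trans h3) (inv_nonneg.2 hV.le)
      _ = M * R ^ n / ρ ^ n := by
          rw [hvol x ρ hρ]
          field_simp
  -- set up parameters
  set L : ℝ := max (Real.log (R ^ β + Hη)) 0 with hLdef
  have hL : 0 ≤ L := le_max_right _ _
  have hRβ : (1:ℝ) ≤ R ^ β := Real.one_le_rpow hR hβ.le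
  have hRβpos : (0:ℝ) < R ^ β + Hη := by linarith
  have hexpL : R ^ β + Hη ≤ Real.exp L := by
    calc R ^ β + Hη = Real.exp (Real.log (R ^ β + Hη)) := (Real.exp_log hRβpos).symm
      _ ≤ Real.exp L := Real.exp_le_exp.2 (le_max_left _ _)
  have hlogR : Real.log R ≤ L / β := by
    have h1 : β * Real.log R = Real.log (R ^ β) := (Real.log_rpow (by linarith) β).symm
    have h2 : Real.log (R ^ β) ≤ Real.log (R ^ β + Hη) :=
      Real.log_le_log (by positivity) (by linarith)
    have h3 : Real.log (R ^ β + Hη) ≤ L := le_max_left _ _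
    rw [le_div_iff₀ hβ, mul_comm]
    linarith
  set r : ℝ := (1 + Hη) ^ (-(1/η)) with hrdef
  have h1H : (0:ℝ) < 1 + Hη := by linarith
  have hr : 0 < r := Real.rpow_pos_of_pos h1H _
  have hrη : r ^ η = (1 + Hη)⁻¹ := by
    rw [hrdef, ← Real.rpow_mul h1H.le]
    rw [show -(1/η) * η = -1 by field_simp]
    exact Real.rpow_neg_one _
  -- Term 1
  have term1 : Hη * r ^ η ≤ 1 := by
    rw [hrη, ← div_eq_mul_inv, div_le_one h1H]; linarith
  -- choice of N
  set N : ℕ := ⌈(Real.log 2 + K * L) / ((n:ℝ) * Real.log 2)⌉₊ with hNdef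
  have hargnn : 0 ≤ (Real.log 2 + K * L) / ((n:ℝ) * Real.log 2) := by positivity
  have hNle : (N : ℝ) ≤ 2 + K' * L := by
    have h1 : (N:ℝ) < (Real.log 2 + K * L) / ((n:ℝ) * Real.log 2) + 1 :=
      Nat.ceil_lt_add_one hargnn
    have h2 : (Real.log 2 + K * L) / ((n:ℝ) * Real.log 2)
        = Real.log 2 / ((n:ℝ) * Real.log 2) + K' * L := by
      rw [add_div, hK'def]; ring
    have h3 : Real.log 2 / ((n:ℝ) * Real.log 2) = 1 / (n:ℝ) := by
      rw [div_mul_eq_div_div_swap, div_self hlog2.ne']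
    have h4 : 1 / (n:ℝ) ≤ 1 := by
      rw [div_le_one hn0]; exact_mod_cast hn
    rw [h2, h3] at h1
    linarith
  have hNge : Real.log 2 + K * L ≤ (N:ℝ) * ((n:ℝ) * Real.log 2) := by
    have h1 : (Real.log 2 + K * L) / ((n:ℝ) * Real.log 2) ≤ (N:ℝ) := Nat.le_ceil _
    calc Real.log 2 + K * L
        = (Real.log 2 + K * L) / ((n:ℝ) * Real.log 2) * ((n:ℝ) * Real.log 2) := by
          field_simp
      _ ≤ (N:ℝ) * ((n:ℝ) * Real.log 2) :=
          mul_le_mul_of_nonneg_right h1 (by positivity)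
  -- Term 3
  set ρ : ℝ := 2 ^ N * r with hρdef
  have hρpos : 0 < ρ := by positivity
  have term3 : M * R ^ n / ρ ^ n ≤ 1 := by
    rw [div_le_one (by positivity)]
    have hρn : ρ ^ n = 2 ^ (N * n) * (1 + Hη) ^ (-(1/η) * n) := by
      rw [hρdef, mul_pow, ← pow_mul]
      congr 1
      rw [hrdef, ← Real.rpow_natCast ((1 + Hη) ^ (-(1/η))) n, ← Real.rpow_mul h1H.le]
    -- upper bound for M * R ^ n * (1+Hη)^((1/η)*n)
    have hHe : Hη ≤ Real.exp L := by linarith [hexpL, hRβ]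
    have h1He : 1 + Hη ≤ Real.exp L := by linarith [hexpL, hRβ]
    have hRpos : (0:ℝ) < R := by linarith
    have h2R : (2 * R) ^ η = 2 ^ η * R ^ η :=
      Real.mul_rpow (by norm_num) hRpos.le
    have h2η : (2:ℝ) ^ η ≤ 2 := by
      calc (2:ℝ) ^ η ≤ (2:ℝ) ^ (1:ℝ) :=
            Real.rpow_le_rpow_of_exponent_le (by norm_num) hη1.le
        _ = 2 := Real.rpow_one 2
    have hRηn : R ^ η * R ^ n ≤ Real.exp ((η + n) * (L / β)) := by
      have e1 : R ^ η * (R:ℝ) ^ n = R ^ (η + (n:ℝ)) := by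
        rw [Real.rpow_add hRpos, Real.rpow_natCast]
      have e2 : R ^ (η + (n:ℝ)) = Real.exp ((η + (n:ℝ)) * Real.log R) := by
        rw [Real.rpow_def_of_pos hRpos, mul_comm]
      rw [e1, e2]
      exact Real.exp_le_exp.2 (mul_le_mul_of_nonneg_left hlogR (by positivity))
    have hpow : (1 + Hη) ^ ((1/η) * (n:ℝ)) ≤ Real.exp (L * ((1/η) * n)) := by
      calc (1 + Hη) ^ ((1/η) * (n:ℝ)) ≤ (Real.exp L) ^ ((1/η) * (n:ℝ)) :=
            Real.rpow_le_rpow h1H.le h1He (by positivity)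
        _ = Real.exp (L * ((1/η) * n)) := (Real.exp_mul L _).symm
    have key : M * R ^ n * (1 + Hη) ^ ((1/η) * (n:ℝ)) ≤ 2 ^ (N * n) := by
      have hLHS : M * R ^ n * (1 + Hη) ^ ((1/η) * (n:ℝ))
          ≤ Real.exp L * 2 * (Real.exp ((η + n) * (L / β)) * Real.exp (L * ((1/η) * n))) := by
        rw [hMdef, h2R]
        have f1 : Hη * (2 ^ η * R ^ η) * R ^ n * (1 + Hη) ^ ((1/η) * (n:ℝ))
            = (Hη * 2 ^ η) * ((R ^ η * R ^ n) * (1 + Hη) ^ ((1/η) * (n:ℝ))) := by ring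
        rw [f1]
        have g1 : Hη * 2 ^ η ≤ Real.exp L * 2 := by
          refine mul_le_mul hHe h2η (by positivity) (Real.exp_pos L).le
        have g2 : (R ^ η * R ^ n) * (1 + Hη) ^ ((1/η) * (n:ℝ))
            ≤ Real.exp ((η + n) * (L / β)) * Real.exp (L * ((1/η) * n)) := by
          refine mul_le_mul hRηn hpow (Real.rpow_nonneg h1H.le _) (Real.exp_pos _).le
        refine mul_le_mul g1 g2 ?_ (by positivity)
        positivity
      have hexp : Real.exp L * 2 * (Real.exp ((η + n) * (L / β)) * Real.exp (L * ((1/η) * n)))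
          = Real.exp (Real.log 2 + (L + (η + n) * (L / β) + L * ((1/η) * n))) := by
        rw [Real.exp_add, Real.exp_add, Real.exp_add, Real.exp_log (by norm_num : (0:ℝ) < 2)]
        ring
      have hKL : L + (η + n) * (L / β) + L * ((1/η) * n) = K * L := by
        rw [hKdef]; field_simp; ring
      have h2pow : Real.exp (Real.log 2 + K * L) ≤ 2 ^ (N * n) := by
        have e3 : (2:ℝ) ^ (N * n) = Real.exp (((N * n : ℕ):ℝ) * Real.log 2) := by
          rw [← Real.rpow_natCast 2 (N * n), Real.rpow_def_of_pos (by norm_num), mul_comm]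
        rw [e3]
        refine Real.exp_le_exp.2 ?_
        push_cast
        calc Real.log 2 + K * L ≤ (N:ℝ) * ((n:ℝ) * Real.log 2) := hNge
          _ = (N:ℝ) * (n:ℝ) * Real.log 2 := by ring
      calc M * R ^ n * (1 + Hη) ^ ((1/η) * (n:ℝ))
          ≤ Real.exp L * 2 * (Real.exp ((η + n) * (L / β)) * Real.exp (L * ((1/η) * n))) := hLHS
        _ = Real.exp (Real.log 2 + (L + (η + n) * (L / β) + L * ((1/η) * n))) := hexp
        _ = Real.exp (Real.log 2 + K * L) := by rw [hKL]
        _ ≤ 2 ^ (N * n) := h2pow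
    -- convert key to the goal
    rw [hρn]
    have hposinv : (0:ℝ) < (1 + Hη) ^ (-(1/η) * (n:ℝ)) := Real.rpow_pos_of_pos h1H _
    have hinv : (1 + Hη) ^ (-(1/η) * (n:ℝ)) * (1 + Hη) ^ ((1/η) * (n:ℝ)) = 1 := by
      rw [← Real.rpow_add h1H]; norm_num
    have := mul_le_mul_of_nonneg_right key hposinv.le
    calc M * R ^ n = M * R ^ n * ((1 + Hη) ^ ((1/η) * (n:ℝ)) * (1 + Hη) ^ (-(1/η) * (n:ℝ))) := by
          rw [mul_comm ((1 + Hη) ^ ((1/η) * (n:ℝ))), hinv, mul_one]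
      _ = M * R ^ n * (1 + Hη) ^ ((1/η) * (n:ℝ)) * (1 + Hη) ^ (-(1/η) * (n:ℝ)) := by ring
      _ ≤ 2 ^ (N * n) * (1 + Hη) ^ (-(1/η) * (n:ℝ)) := this
  -- final assembly
  have hchain : |f x| ≤ Hη * r ^ η + N * (2 ^ n * B) + M * R ^ n / ρ ^ n := by
    have t1 := stepA r hr
    have t2 := stepC r hr N
    have t3 := stepE ρ hρpos
    have t2' : |A r - A ρ| ≤ N * (2 ^ n * B) := by rw [hρdef]; exact t2
    have habc : |f x| ≤ |f x - A r| + |A r - A ρ| + |A ρ| := by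
      have e1 : f x = (f x - A r) + (A r - A ρ) + A ρ := by ring
      calc |f x| = |(f x - A r) + (A r - A ρ) + A ρ| := by rw [← e1]
        _ ≤ |(f x - A r) + (A r - A ρ)| + |A ρ| := abs_add_le _ _
        _ ≤ |f x - A r| + |A r - A ρ| + |A ρ| := add_le_add_left (abs_add_le _ _) _
    exact habc.trans (add_le_add (add_le_add t1 t2') t3)
  have hN2 : (N:ℝ) * (2 ^ n * B) ≤ (2 + K') * (1 + L) * (2 ^ n * B) := by
    refine mul_le_mul_of_nonneg_right ?_ (by positivity)
    calc (N:ℝ) ≤ 2 + K' * L := hNle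
      _ ≤ (2 + K') * (1 + L) := by nlinarith [mul_nonneg hK'.le hL]
  have hfinal : |f x| ≤ 2 + (2 + K') * (1 + L) * (2 ^ n * B) := by
    have := hchain.trans (add_le_add (add_le_add term1 hN2) term3)
    linarith
  have hgoal : 2 + (2 + K') * (1 + L) * (2 ^ n * B)
      ≤ (2 + 2 ^ n * (2 + K')) + (2 + 2 ^ n * (2 + K')) * B * (1 + L) := by
    have h2n : (0:ℝ) ≤ 2 ^ n := by positivity
    nlinarith [mul_nonneg hBnn hL, mul_nonneg (mul_nonneg h2n hBnn) hL,
      mul_nonneg hBnn (le_of_lt hK'), mul_nonneg h2n hBnn]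
  calc |f x| ≤ 2 + (2 + K') * (1 + L) * (2 ^ n * B) := hfinal
    _ ≤ (2 + 2 ^ n * (2 + K')) + (2 + 2 ^ n * (2 + K')) * B * (1 + L) := hgoal
end

section
/- Let n ≥ 1, p ≥ 1, and let k ≥ 1 with n = kp. Let E_l = B(0, 2^{k+l+3}) \ B(0, 2^{l-1}). Then there is a constant C = C(n, k, p) such that for any g ∈ L^p(ℝ^n) and any integers m_0 ≥ 1, ∑_{l=-m_0}^{m_0-1} 2^{kl}·(1/|E_l|)∫_{E_l} |g(y)| dy ≤ C·m_0^{(p-1)/p}·‖g‖_{L^p(ℝ^n)}. -/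
open MeasureTheory Metric Finset Real
open scoped ENNReal NNReal

private lemma sum_rpow_le_aux (s : Finset ℤ) (c : ℤ → ℝ≥0∞) {p : ℝ} (hp : 1 ≤ p) :
    ∑ i ∈ s, c i ^ (1/p) ≤ (s.card : ℝ≥0∞) ^ (1 - 1/p) * (∑ i ∈ s, c i) ^ (1/p) := by
  rcases eq_or_lt_of_le hp with h1 | h1
  · simp [← h1]
  · have hpq := Real.HolderConjugate.conjExponent h1
    have H := ENNReal.inner_le_Lp_mul_Lq s (fun i => c i ^ (1/p)) (fun _ => (1:ℝ≥0∞)) hpq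
    have hc : ∀ i : ℤ, ((c i ^ (1/p)) ^ p) = c i := by
      intro i
      rw [← ENNReal.rpow_mul, one_div, inv_mul_cancel₀ (by positivity : p ≠ 0),
        ENNReal.rpow_one]
    simp only [mul_one, ENNReal.one_rpow, hc, Finset.sum_const, nsmul_eq_mul] at H
    have hq : 1 / p.conjExponent = 1 - 1/p := by
      have := hpq.inv_add_inv_eq_one
      rw [one_div, one_div]
      linarith
    rw [hq] at H
    simpa [mul_comm] using H

/-- Summed annular averages of `|g|` weighted by `2^{kl}` are bounded by
`C m₀^{(p-1)/p} ‖g‖_{L^p}` under the critical scaling `n = kp`. -/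
theorem annulus_sum_Lp_estimate (n k : ℕ) (hn : 1 ≤ n) (hk : 1 ≤ k) (p : ℝ)
    (hp : 1 ≤ p) (hnp : (n : ℝ) = (k : ℝ) * p) :
    ∃ C : ℝ, 0 < C ∧
      ∀ (g : EuclideanSpace ℝ (Fin n) → ℝ),
        MemLp g (ENNReal.ofReal p) volume →
        ∀ m₀ : ℕ, 1 ≤ m₀ →
          ∑ l ∈ Finset.Icc (-(m₀ : ℤ)) ((m₀ : ℤ) - 1),
              (2 : ℝ) ^ ((k : ℤ) * l)
                * ⨍ y in (ball (0 : EuclideanSpace ℝ (Fin n)) ((2 : ℝ) ^ ((k : ℤ) + l + 3))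
                    \ ball (0 : EuclideanSpace ℝ (Fin n)) ((2 : ℝ) ^ (l - 1))),
                    |g y| ∂volume
            ≤ C * (m₀ : ℝ) ^ ((p - 1) / p)
              * (eLpNorm g (ENNReal.ofReal p) volume).toReal := by
  classical
  have hp0 : (0:ℝ) < p := one_pos.trans_le hp
  set E := EuclideanSpace ℝ (Fin n)
  set V : ℝ≥0∞ := volume (ball (0 : E) 1) with hVdef
  have hV0 : V ≠ 0 := (measure_ball_pos _ _ one_pos).ne'
  have hVt : V ≠ ⊤ := measure_ball_lt_top.ne
  set P : ℝ≥0∞ := ENNReal.ofReal p with hPdef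
  have hP1 : 1 ≤ P := by
    rw [hPdef, ← ENNReal.ofReal_one]
    exact ENNReal.ofReal_le_ofReal hp
  have hP0 : P ≠ 0 := by
    simp only [hPdef, ne_eq, ENNReal.ofReal_eq_zero, not_le]; linarith
  have hPt : P ≠ ⊤ := ENNReal.ofReal_ne_top
  have hPr : P.toReal = p := ENNReal.toReal_ofReal hp0.le
  have hVp0 : V ^ (1/p) ≠ 0 := by
    simp [ENNReal.rpow_eq_zero_iff, hV0, hVt]
  have hVpt : V ^ (1/p) ≠ ⊤ := by
    simp [ENNReal.rpow_eq_top_iff, hV0, hVt]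
  set C₀ : ℝ≥0∞ := (V ^ (1/p))⁻¹ with hC0def
  have hC00 : C₀ ≠ 0 := ENNReal.inv_ne_zero.2 hVpt
  have hC0t : C₀ ≠ ⊤ := ENNReal.inv_ne_top.2 hVp0
  have hk40 : ((k:ℝ≥0∞) + 4) ^ (1/p) ≠ 0 := by
    simp [ENNReal.rpow_eq_zero_iff]
  have hk4t : ((k:ℝ≥0∞) + 4) ^ (1/p) ≠ ⊤ := by
    simp [ENNReal.rpow_eq_top_iff]
  set CE : ℝ≥0∞ := C₀ * (2 * ((k:ℝ≥0∞) + 4) ^ (1/p)) with hCEdef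
  have hCE0 : CE ≠ 0 := by
    simp [hCEdef, hC00, hk40]
  have hCEt : CE ≠ ⊤ := by
    simp [hCEdef, ENNReal.mul_eq_top, hC0t, hk4t]
  refine ⟨CE.toReal, ENNReal.toReal_pos hCE0 hCEt, ?_⟩
  intro g hg m₀ hm₀
  set N : ℝ≥0∞ := eLpNorm g P volume with hNdef
  have hNt : N ≠ ⊤ := hg.2.ne
  set s : Finset ℤ := Finset.Icc (-(m₀ : ℤ)) ((m₀ : ℤ) - 1) with hs
  set Bl : ℤ → Set E := fun l =>
    ball (0 : E) ((2 : ℝ) ^ ((k : ℤ) + l + 3)) \ ball (0 : E) ((2 : ℝ) ^ (l - 1)) with hBl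
  have hmeasB : ∀ l, MeasurableSet (Bl l) := fun l =>
    measurableSet_ball.diff measurableSet_ball
  -- powers of two in ℝ≥0∞
  have h2ofReal : ∀ m : ℤ, (2:ℝ≥0∞) ^ ((m:ℤ):ℝ) = ENNReal.ofReal ((2:ℝ) ^ m) := by
    intro m
    rw [← Real.rpow_intCast (2:ℝ) m, ← ENNReal.ofReal_rpow_of_pos two_pos]
    norm_num
  have h2ne0 : ∀ r : ℝ, (2:ℝ≥0∞) ^ r ≠ 0 := fun r => by
    simp [ENNReal.rpow_eq_zero_iff]
  have h2net : ∀ r : ℝ, (2:ℝ≥0∞) ^ r ≠ ⊤ := fun r => by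
    simp [ENNReal.rpow_eq_top_iff]
  -- volume bounds for the annuli
  have hvol_lb : ∀ l : ℤ, (2:ℝ≥0∞) ^ (((l * n : ℤ)):ℝ) * V ≤ volume (Bl l) := by
    intro l
    have hsub : ball (0 : E) ((2:ℝ) ^ (l-1)) ⊆ ball (0 : E) ((2:ℝ) ^ ((k:ℤ) + l + 3)) :=
      ball_subset_ball (zpow_le_zpow_right₀ one_le_two (by omega))
    have hball : ∀ m : ℤ, volume (ball (0:E) ((2:ℝ) ^ m)) =
        ENNReal.ofReal (((2:ℝ) ^ m) ^ n) * V := by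
      intro m
      rw [Measure.addHaar_ball_of_pos _ _ (zpow_pos two_pos m),
        show Module.finrank ℝ E = n from finrank_euclideanSpace_fin]
    have hdiff : volume (Bl l) =
        volume (ball (0:E) ((2:ℝ) ^ ((k:ℤ) + l + 3))) - volume (ball (0:E) ((2:ℝ) ^ (l-1))) := by
      rw [hBl]
      exact measure_diff hsub measurableSet_ball.nullMeasurableSet measure_ball_lt_top.ne
    rw [hdiff, hball, hball]
    refine ENNReal.le_sub_of_add_le_right (by finiteness) ?_
    have hpowpow : ∀ m : ℤ, ((2:ℝ) ^ m) ^ n = (2:ℝ) ^ (m * n) := by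
      intro m
      rw [← zpow_natCast ((2:ℝ) ^ m) n, ← zpow_mul]
    rw [h2ofReal, ← add_mul]
    refine mul_le_mul_left ?_ V
    rw [← ENNReal.ofReal_add (by positivity) (by positivity)]
    refine ENNReal.ofReal_le_ofReal ?_
    rw [hpowpow, hpowpow]
    have h1 : (2:ℝ) ^ (l * (n:ℤ)) + (2:ℝ) ^ ((l-1) * n) ≤ 2 * (2:ℝ) ^ (l * (n:ℤ)) := by
      have := zpow_le_zpow_right₀ (one_le_two (α := ℝ))
        (mul_le_mul_of_nonneg_right (by omega : (l:ℤ) - 1 ≤ l) (by positivity : (0:ℤ) ≤ n))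
      linarith
    have h2 : 2 * (2:ℝ) ^ (l * (n:ℤ)) = (2:ℝ) ^ (l * (n:ℤ) + 1) := by
      rw [zpow_add_one₀ (two_ne_zero)]; ring
    have h3 : (2:ℝ) ^ (l * (n:ℤ) + 1) ≤ (2:ℝ) ^ (((k:ℤ) + l + 3) * n) := by
      refine zpow_le_zpow_right₀ one_le_two ?_
      have h4 : ((k:ℤ) + l + 3) * n = l * n + ((k:ℤ) + 3) * n := by ring
      have h5 : (1:ℤ) ≤ ((k:ℤ) + 3) * n := by
        have : (1:ℤ) ≤ (k:ℤ) := by exact_mod_cast hk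
        have : (1:ℤ) ≤ (n:ℤ) := by exact_mod_cast hn
        nlinarith
      omega
    linarith
  have hvolt : ∀ l : ℤ, volume (Bl l) ≠ ⊤ := fun l =>
    ((measure_mono Set.diff_subset).trans_lt measure_ball_lt_top).ne
  have hvol0 : ∀ l : ℤ, volume (Bl l) ≠ 0 := by
    intro l
    intro h
    have h1 := hvol_lb l
    rw [h] at h1
    exact (ENNReal.mul_pos (h2ne0 _) hV0).ne' (le_antisymm h1 zero_le)
  -- the main ENNReal-valued quantities
  set T : ℤ → ℝ≥0∞ := fun l =>
    (2:ℝ≥0∞) ^ ((((k:ℤ) * l : ℤ)):ℝ) *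
      ((volume (Bl l))⁻¹ * ∫⁻ y in Bl l, (‖g y‖₊ : ℝ≥0∞) ∂volume) with hT
  set S : ℤ → ℝ≥0∞ := fun l => eLpNorm g P (volume.restrict (Bl l)) with hS
  set c : ℤ → ℝ≥0∞ := fun l => ∫⁻ y in Bl l, (‖g y‖₊ : ℝ≥0∞) ^ p ∂volume with hc
  have hSc : ∀ l, S l = (c l) ^ (1/p) := by
    intro l
    simp only [hS, hc]
    rw [eLpNorm_eq_lintegral_rpow_enorm_toReal hP0 hPt, hPr]; rfl
  have hSN : ∀ l, S l ≤ N := fun l =>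
    eLpNorm_mono_measure _ Measure.restrict_le_self
  -- Hölder on each annulus
  have key2 : ∀ l : ℤ, T l ≤ C₀ * S l := by
    intro l
    have h1 : (∫⁻ y in Bl l, (‖g y‖₊ : ℝ≥0∞) ∂volume) ≤
        S l * (volume (Bl l)) ^ (1 - 1/p) := by
      have H := eLpNorm_le_eLpNorm_mul_rpow_measure_univ (p := 1) (q := P) hP1
        (hg.1.restrict (s := Bl l))
      rw [eLpNorm_one_eq_lintegral_enorm, Measure.restrict_apply_univ] at H
      simp [hPr] at H; rw [one_div]; exact H
    have h2 : (volume (Bl l))⁻¹ * (S l * (volume (Bl l)) ^ (1 - 1/p)) =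
        (volume (Bl l)) ^ (-(1/p)) * S l := by
      rw [← ENNReal.rpow_neg_one (volume (Bl l)), mul_comm (S l), ← mul_assoc,
        ← ENNReal.rpow_add _ _ (hvol0 l) (hvolt l),
        show (-1 : ℝ) + (1 - 1/p) = -(1/p) by ring]
    have h3 : (volume (Bl l)) ^ (-(1/p)) ≤
        ((2:ℝ≥0∞) ^ (((l * n : ℤ)):ℝ) * V) ^ (-(1/p)) := by
      rw [ENNReal.rpow_neg, ENNReal.rpow_neg]
      exact ENNReal.inv_le_inv.2 (ENNReal.rpow_le_rpow (hvol_lb l) (by positivity))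
    have h4 : (2:ℝ≥0∞) ^ ((((k:ℤ) * l : ℤ)):ℝ) *
        ((2:ℝ≥0∞) ^ (((l * n : ℤ)):ℝ) * V) ^ (-(1/p)) = C₀ := by
      rw [ENNReal.mul_rpow_of_ne_top (h2net _) hVt, ← ENNReal.rpow_mul, ← mul_assoc,
        ← ENNReal.rpow_add _ _ two_ne_zero ENNReal.ofNat_ne_top]
      have hexp : ((((k:ℤ) * l : ℤ)):ℝ) + (((l * n : ℤ)):ℝ) * (-(1/p)) = 0 := by
        push_cast
        rw [hnp]
        field_simp
        ring
      rw [hexp, ENNReal.rpow_zero, one_mul, ENNReal.rpow_neg, hC0def]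
    calc T l ≤ (2:ℝ≥0∞) ^ ((((k:ℤ) * l : ℤ)):ℝ) *
        ((volume (Bl l))⁻¹ * (S l * (volume (Bl l)) ^ (1 - 1/p))) := by
          exact mul_le_mul_right (mul_le_mul_right h1 _) _
      _ = ((2:ℝ≥0∞) ^ ((((k:ℤ) * l : ℤ)):ℝ) * (volume (Bl l)) ^ (-(1/p))) * S l := by
          rw [h2, ← mul_assoc]
      _ ≤ ((2:ℝ≥0∞) ^ ((((k:ℤ) * l : ℤ)):ℝ) *
            ((2:ℝ≥0∞) ^ (((l * n : ℤ)):ℝ) * V) ^ (-(1/p))) * S l := by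
          exact mul_le_mul_left (mul_le_mul_right h3 _) _
      _ = C₀ * S l := by rw [h4]
  -- bounded overlap
  have hover : ∑ l ∈ s, c l ≤ ((k:ℝ≥0∞) + 4) * ∫⁻ y, (‖g y‖₊ : ℝ≥0∞) ^ p ∂volume := by
    have hfm : AEMeasurable (fun y => (‖g y‖₊ : ℝ≥0∞) ^ p) volume :=
      hg.1.enorm.pow_const p
    have hcount : ∀ y : E, ((s.filter (fun l => y ∈ Bl l)).card : ℝ≥0∞) ≤ (k:ℝ≥0∞) + 4 := by
      intro y
      set t := s.filter (fun l => y ∈ Bl l) with ht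
      rcases t.eq_empty_or_nonempty with hemp | hne
      · simp [hemp]
      · have hsubt : t ⊆ Finset.Icc (t.min' hne) (t.min' hne + (k:ℤ) + 3) := by
          intro l hl
          have h1 : t.min' hne ≤ l := t.min'_le l hl
          have hyl : y ∈ Bl l := (Finset.mem_filter.1 hl).2
          have hya : y ∈ Bl (t.min' hne) := (Finset.mem_filter.1 (t.min'_mem hne)).2
          have h2 : (2:ℝ) ^ (l - 1) ≤ ‖y‖ := by
            have := hyl.2
            rw [mem_ball_zero_iff] at this
            linarith [not_lt.1 this]
          have h3 : ‖y‖ < (2:ℝ) ^ ((k:ℤ) + t.min' hne + 3) := by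
            have := hya.1
            rwa [mem_ball_zero_iff] at this
          have h4 : (2:ℝ) ^ (l - 1) < (2:ℝ) ^ ((k:ℤ) + t.min' hne + 3) := lt_of_le_of_lt h2 h3
          have h5 : l - 1 < (k:ℤ) + t.min' hne + 3 :=
            (zpow_lt_zpow_iff_right₀ (one_lt_two (α := ℝ))).1 h4
          exact Finset.mem_Icc.2 ⟨h1, by omega⟩
        have hcard : t.card ≤ k + 4 := by
          calc t.card ≤ (Finset.Icc (t.min' hne) (t.min' hne + (k:ℤ) + 3)).card :=
              Finset.card_le_card hsubt
            _ = k + 4 := by rw [Int.card_Icc]; omega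
        exact_mod_cast Nat.cast_le.2 hcard
    calc ∑ l ∈ s, c l
        = ∑ l ∈ s, ∫⁻ y, (Bl l).indicator (fun y => (‖g y‖₊ : ℝ≥0∞) ^ p) y ∂volume := by
          refine Finset.sum_congr rfl fun l _ => ?_
          rw [lintegral_indicator (hmeasB l)]
      _ = ∫⁻ y, ∑ l ∈ s, (Bl l).indicator (fun y => (‖g y‖₊ : ℝ≥0∞) ^ p) y ∂volume := by
          rw [lintegral_finset_sum' s (fun l _ => hfm.indicator (hmeasB l))]
      _ ≤ ∫⁻ y, ((k:ℝ≥0∞) + 4) * (‖g y‖₊ : ℝ≥0∞) ^ p ∂volume := by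
          refine lintegral_mono fun y => ?_
          have : ∑ l ∈ s, (Bl l).indicator (fun y => (‖g y‖₊ : ℝ≥0∞) ^ p) y
              = ((s.filter (fun l => y ∈ Bl l)).card : ℝ≥0∞) * (‖g y‖₊ : ℝ≥0∞) ^ p := by
            simp only [Set.indicator_apply]
            rw [Finset.sum_ite, Finset.sum_const, Finset.sum_const_zero, add_zero,
              nsmul_eq_mul]
          rw [this]
          exact mul_le_mul_left (hcount y) _
      _ = ((k:ℝ≥0∞) + 4) * ∫⁻ y, (‖g y‖₊ : ℝ≥0∞) ^ p ∂volume := by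
          rw [lintegral_const_mul' _ _ (by finiteness)]
  -- total lintegral equals N^p stuff
  have hNc : (∫⁻ y, (‖g y‖₊ : ℝ≥0∞) ^ p ∂volume) ^ (1/p) = N := by
    rw [hNdef, eLpNorm_eq_lintegral_rpow_enorm_toReal hP0 hPt, hPr]; rfl
  -- cardinality
  have hcards : (s.card : ℝ≥0∞) = 2 * (m₀ : ℝ≥0∞) := by
    have : s.card = 2 * m₀ := by
      rw [hs, Int.card_Icc]
      omega
    rw [this]; push_cast; ring
  -- summing up, in ℝ≥0∞
  have hsum : ∑ l ∈ s, T l ≤ CE * (m₀ : ℝ≥0∞) ^ (1 - 1/p) * N := by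
    have h1p : (0:ℝ) ≤ 1 - 1/p := by
      have : 1/p ≤ 1 := by
        rw [div_le_one hp0]; exact hp
      linarith
    calc ∑ l ∈ s, T l ≤ ∑ l ∈ s, C₀ * S l := Finset.sum_le_sum fun l _ => key2 l
      _ = C₀ * ∑ l ∈ s, (c l) ^ (1/p) := by
          rw [← Finset.mul_sum]
          exact congrArg _ (Finset.sum_congr rfl fun l _ => hSc l)
      _ ≤ C₀ * ((s.card : ℝ≥0∞) ^ (1 - 1/p) * (∑ l ∈ s, c l) ^ (1/p)) :=
          mul_le_mul_right (sum_rpow_le_aux s c hp) _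
      _ ≤ C₀ * ((2 * (m₀:ℝ≥0∞)) ^ (1 - 1/p) *
            (((k:ℝ≥0∞) + 4) * ∫⁻ y, (‖g y‖₊ : ℝ≥0∞) ^ p ∂volume) ^ (1/p)) := by
          rw [hcards]
          exact mul_le_mul_right (mul_le_mul_right
            (ENNReal.rpow_le_rpow hover (by positivity)) _) _
      _ ≤ CE * (m₀ : ℝ≥0∞) ^ (1 - 1/p) * N := by
          rw [ENNReal.mul_rpow_of_nonneg _ _ h1p,
            ENNReal.mul_rpow_of_nonneg _ _ (by positivity : (0:ℝ) ≤ 1/p), hNc, hCEdef]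
          have h2le : (2:ℝ≥0∞) ^ (1 - 1/p) ≤ 2 := by
            calc (2:ℝ≥0∞) ^ (1 - 1/p) ≤ (2:ℝ≥0∞) ^ (1:ℝ) :=
                ENNReal.rpow_le_rpow_of_exponent_le one_le_two
                  (by have := one_div_pos.mpr hp0; linarith)
              _ = 2 := ENNReal.rpow_one 2
          calc C₀ * ((2:ℝ≥0∞) ^ (1 - 1/p) * (m₀:ℝ≥0∞) ^ (1 - 1/p) *
                (((k:ℝ≥0∞) + 4) ^ (1/p) * N))
              ≤ C₀ * (2 * (m₀:ℝ≥0∞) ^ (1 - 1/p) * (((k:ℝ≥0∞) + 4) ^ (1/p) * N)) := by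
                exact mul_le_mul_right (mul_le_mul_left (mul_le_mul_left h2le _) _) _
            _ = C₀ * (2 * ((k:ℝ≥0∞) + 4) ^ (1/p)) * (m₀:ℝ≥0∞) ^ (1 - 1/p) * N := by ring
  -- each term is finite
  have hTfin : ∀ l ∈ s, T l ≠ ⊤ := by
    intro l _
    exact ne_top_of_le_ne_top
      (ENNReal.mul_ne_top hC0t (ne_top_of_le_ne_top hNt (hSN l))) (key2 l)
  -- identify the real terms with toReal of T
  have hterm : ∀ l ∈ s, (2 : ℝ) ^ ((k : ℤ) * l)
      * ⨍ y in Bl l, |g y| ∂volume = (T l).toReal := by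
    intro l _
    have hmg : AEStronglyMeasurable (fun y => |g y|) (volume.restrict (Bl l)) := by
      simpa [Real.norm_eq_abs] using (hg.1.restrict (s := Bl l)).norm
    rw [setAverage_eq, smul_eq_mul,
      integral_eq_lintegral_of_nonneg_ae
        (Filter.Eventually.of_forall fun y => abs_nonneg (g y)) hmg]
    simp_rw [← Real.enorm_eq_ofReal_abs]
    have hTr : (T l).toReal = (2:ℝ) ^ ((k:ℤ) * l) *
        ((volume (Bl l)).toReal⁻¹ * (∫⁻ y in Bl l, (‖g y‖₊ : ℝ≥0∞) ∂volume).toReal) := by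
      simp only [hT, ENNReal.toReal_mul, ENNReal.toReal_inv]
      congr 1
      rw [← ENNReal.toReal_rpow, ENNReal.toReal_ofNat, Real.rpow_intCast]
    rw [hTr]; rfl
  -- conclude
  calc ∑ l ∈ s, (2 : ℝ) ^ ((k : ℤ) * l) * ⨍ y in (ball (0 : E) ((2 : ℝ) ^ ((k : ℤ) + l + 3))
          \ ball (0 : E) ((2 : ℝ) ^ (l - 1))), |g y| ∂volume
      = ∑ l ∈ s, (T l).toReal := Finset.sum_congr rfl hterm
    _ = (∑ l ∈ s, T l).toReal := (ENNReal.toReal_sum hTfin).symm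
    _ ≤ (CE * (m₀ : ℝ≥0∞) ^ (1 - 1/p) * N).toReal := by
        refine ENNReal.toReal_mono ?_ hsum
        exact ENNReal.mul_ne_top (ENNReal.mul_ne_top hCEt
          (ENNReal.rpow_ne_top_of_nonneg (by
            have : 1/p ≤ 1 := by rw [div_le_one hp0]; exact hp
            linarith) (ENNReal.natCast_ne_top m₀))) hNt
    _ = CE.toReal * (m₀ : ℝ) ^ ((p - 1) / p) * N.toReal := by
        rw [ENNReal.toReal_mul, ENNReal.toReal_mul, ← ENNReal.toReal_rpow,
          ENNReal.toReal_natCast,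
          show (p - 1)/p = 1 - 1/p by rw [sub_div, div_self hp0.ne']]
end
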